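/- arXiv:1011.3350 — 6 statements merged into one kernel-verified Lean document; each statement's English description precedes it below -/
import Mathlib

section
/- Let G be a finite group and {A_i} an inverse system of G-modules indexed by the natural numbers with transition maps φ_{ji}: A_j → A_i for j > i. If every φ_{ji} is surjective, then the natural map H^1(G, lim A_i) → lim H^1(G, A_i) is surjective. -/
section H1
variable (G : Type) [Group G]

/-- 1-cocycles of `G` with values in `M`. -/
def zc (M : Type) [AddCommGroup M] [DistribMulAction G M] : AddSubgroup (G → M) where
  carrier := {f | ∀ g h : G, f (g * h) = f g + g • f h}
  zero_mem' := by intro g h; simp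
  add_mem' := by
    intro a b ha hb g h
    simp only [Pi.add_apply]
    rw [ha g h, hb g h, smul_add]
    abel
  neg_mem' := by
    intro a ha g h
    simp only [Pi.neg_apply]
    rw [ha g h, smul_neg]
    abel

/-- 1-coboundaries of `G` with values in `M`. -/
def cb (M : Type) [AddCommGroup M] [DistribMulAction G M] : AddSubgroup (G → M) where
  carrier := {f | ∃ m : M, ∀ g : G, f g = g • m - m}
  zero_mem' := ⟨0, fun g => by simp⟩
  add_mem' := by
    rintro a b ⟨m, hm⟩ ⟨m', hm'⟩
    refine ⟨m + m', fun g => ?_⟩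
    simp only [Pi.add_apply, hm g, hm' g, smul_add]
    abel
  neg_mem' := by
    rintro a ⟨m, hm⟩
    refine ⟨-m, fun g => ?_⟩
    simp only [Pi.neg_apply, hm g, smul_neg]
    abel

/-- First group cohomology `H¹(G, M)` defined via 1-cocycles modulo 1-coboundaries. -/
abbrev H1 (M : Type) [AddCommGroup M] [DistribMulAction G M] : Type :=
  zc G M ⧸ ((cb G M).addSubgroupOf (zc G M))

variable {G}

/-- The map on 1-cocycles induced by an equivariant homomorphism. -/
def zcMap {M N : Type} [AddCommGroup M] [DistribMulAction G M] [AddCommGroup N]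
    [DistribMulAction G N] (φ : M →+ N) (hφ : ∀ (g : G) (m : M), φ (g • m) = g • φ m) :
    zc G M →+ zc G N where
  toFun f := ⟨fun g => φ (f.1 g), by
    intro g h
    have hf : f.1 (g * h) = f.1 g + g • f.1 h := f.2 g h
    dsimp only
    rw [hf, map_add, hφ]⟩
  map_zero' := Subtype.ext (funext fun g => by simp)
  map_add' a b := Subtype.ext (funext fun g => by simp)

/-- The map on `H¹` induced by an equivariant homomorphism. -/
def H1map {M N : Type} [AddCommGroup M] [DistribMulAction G M] [AddCommGroup N]
    [DistribMulAction G N] (φ : M →+ N) (hφ : ∀ (g : G) (m : M), φ (g • m) = g • φ m) :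
    H1 G M →+ H1 G N :=
  QuotientAddGroup.map _ _ (zcMap φ hφ) (by
    intro f h
    rw [AddSubgroup.mem_addSubgroupOf] at h
    rw [AddSubgroup.mem_comap, AddSubgroup.mem_addSubgroupOf]
    obtain ⟨m, hm⟩ := h
    exact ⟨φ m, fun g => by simp [zcMap, hm g, hφ]⟩)

end H1

section Lim
variable (G : Type) [Group G]
variable (A : ℕ → Type) [∀ n, AddCommGroup (A n)] (φ : ∀ n, A (n + 1) →+ A n)

/-- The inverse limit of a tower of abelian groups, as a subgroup of the product. -/
def limSub : AddSubgroup (∀ n, A n) where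
  carrier := {a | ∀ n, φ n (a (n + 1)) = a n}
  zero_mem' := fun n => map_zero _
  add_mem' := by intro a b ha hb n; rw [Pi.add_apply, Pi.add_apply, map_add, ha n, hb n]
  neg_mem' := by intro a ha n; rw [Pi.neg_apply, Pi.neg_apply, map_neg, ha n]

variable [∀ n, DistribMulAction G (A n)]
  (hφ : ∀ (n : ℕ) (g : G) (a : A (n + 1)), φ n (g • a) = g • φ n a)

/-- The `G`-action on the inverse limit of a tower of `G`-modules. -/
def limAct : DistribMulAction G (limSub A φ) where
  smul g a := ⟨fun n => g • a.1 n, fun n => by rw [hφ, a.2 n]⟩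
  one_smul a := Subtype.ext (funext fun n => one_smul G (a.1 n))
  mul_smul g h a := Subtype.ext (funext fun n => mul_smul g h (a.1 n))
  smul_zero g := Subtype.ext (funext fun n => smul_zero g)
  smul_add g a b := Subtype.ext (funext fun n => smul_add g (a.1 n) (b.1 n))

/-- Projection from the inverse limit to the `n`-th term. -/
def limProj (n : ℕ) : limSub A φ →+ A n :=
  (Pi.evalAddMonoidHom A n).comp (limSub A φ).subtype

end Lim


section StepAux
variable {G : Type} [Group G]
variable {M N : Type} [AddCommGroup M] [DistribMulAction G M] [AddCommGroup N]
  [DistribMulAction G N]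

lemma step_exists (φ : M →+ N) (hφ : ∀ (g : G) (m : M), φ (g • m) = g • φ m)
    (hs : Function.Surjective φ) (x : zc G M) (y : zc G N)
    (h : (QuotientAddGroup.mk (zcMap φ hφ x) : H1 G N) = QuotientAddGroup.mk y) :
    ∃ x' : zc G M, (QuotientAddGroup.mk x' : H1 G M) = QuotientAddGroup.mk x ∧
      zcMap φ hφ x' = y := by
  rw [QuotientAddGroup.eq, AddSubgroup.mem_addSubgroupOf] at h
  obtain ⟨m, hm⟩ := h
  obtain ⟨m', hm'⟩ := hs m
  have cmem : (fun g => g • m' - m') ∈ zc G M := by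
    intro g h
    dsimp only
    rw [mul_smul, smul_sub]
    abel
  refine ⟨x + ⟨fun g => g • m' - m', cmem⟩, ?_, ?_⟩
  · rw [eq_comm, QuotientAddGroup.eq, AddSubgroup.mem_addSubgroupOf]
    refine ⟨m', fun g => ?_⟩
    simp [AddSubgroup.coe_add, AddSubgroup.coe_neg]
  · apply Subtype.ext
    funext g
    have hmg := hm g
    show φ (x.1 g + (g • m' - m')) = y.1 g
    have : (-(zcMap φ hφ x) + y).1 g = g • m - m := hmg
    have h2 : -(φ (x.1 g)) + y.1 g = g • m - m := this
    rw [map_add, map_sub, hφ, hm']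
    rw [← h2]
    abel

end StepAux

/-- Let `G` be a finite group and `{A_i}` an inverse system of `G`-modules
indexed by ℕ with surjective transition maps. Then the natural map
`H¹(G, lim A_i) → lim H¹(G, A_i)` is surjective: every compatible family of cohomology
classes is the image of a class of the inverse limit. -/
theorem stmt0 (G : Type) [Group G] [Finite G]
    (A : ℕ → Type) [∀ n, AddCommGroup (A n)] [∀ n, DistribMulAction G (A n)]
    (φ : ∀ n, A (n + 1) →+ A n)
    (hφ : ∀ (n : ℕ) (g : G) (a : A (n + 1)), φ n (g • a) = g • φ n a)
    (hsurj : ∀ n, Function.Surjective (φ n)) :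
    ∀ α : ∀ n, H1 G (A n), (∀ n, H1map (φ n) (hφ n) (α (n + 1)) = α n) →
      ∃ β : @H1 G _ ↥(limSub A φ) _ (limAct G A φ hφ),
        ∀ n, @H1map G _ ↥(limSub A φ) (A n) _ (limAct G A φ hφ) _ _ (limProj A φ n)
          (fun _ _ => rfl) β = α n := by
  intro α hα
  classical
  letI := limAct G A φ hφ
  have step : ∀ (n : ℕ) (x : {x : zc G (A n) // (QuotientAddGroup.mk x : H1 G (A n)) = α n}),
      {x' : zc G (A (n + 1)) // ((QuotientAddGroup.mk x' : H1 G (A (n + 1))) = α (n + 1)) ∧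
        zcMap (φ n) (hφ n) x' = x.1} := by
    intro n x
    have h1 : (QuotientAddGroup.mk ((α (n + 1)).out) : H1 G (A (n + 1))) = α (n + 1) :=
      Quotient.out_eq _
    have h2 : (QuotientAddGroup.mk (zcMap (φ n) (hφ n) ((α (n + 1)).out)) : H1 G (A n)) =
        QuotientAddGroup.mk x.1 := by
      have := hα n
      rw [← h1] at this
      rw [x.2]
      rw [← this]
      rfl
    have hex := step_exists (φ n) (hφ n) (hsurj n) ((α (n + 1)).out) x.1 h2
    exact ⟨Classical.choose hex, by rw [(Classical.choose_spec hex).1, h1],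
      (Classical.choose_spec hex).2⟩
  let F : ∀ n, {x : zc G (A n) // (QuotientAddGroup.mk x : H1 G (A n)) = α n} :=
    fun n => Nat.rec ⟨(α 0).out, Quotient.out_eq _⟩ (fun n p => ⟨(step n p).1, (step n p).2.1⟩) n
  have hF : ∀ n, zcMap (φ n) (hφ n) (F (n + 1)).1 = (F n).1 := fun n => (step n (F n)).2.2
  have hFg : ∀ (n : ℕ) (g : G), φ n ((F (n + 1)).1.1 g) = (F n).1.1 g := by
    intro n g
    have := congrArg (fun z => z.1 g) (hF n)
    exact this
  refine ⟨QuotientAddGroup.mk ⟨fun g => ⟨fun n => (F n).1.1 g, fun n => hFg n g⟩, ?_⟩, ?_⟩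
  · intro g h
    apply Subtype.ext
    funext n
    exact (F n).1.2 g h
  · intro n
    have : @H1map G _ ↥(limSub A φ) (A n) _ (limAct G A φ hφ) _ _ (limProj A φ n)
        (fun _ _ => rfl) (QuotientAddGroup.mk ⟨fun g => ⟨fun n => (F n).1.1 g, fun n => hFg n g⟩,
          fun g h => Subtype.ext (funext fun n => (F n).1.2 g h)⟩) =
        QuotientAddGroup.mk ((F n).1) := by
      rfl
    rw [this, (F n).2]
end

section
/- Let G be a finite group and {A_i} an inverse system of G-modules indexed by the natural numbers with transition maps φ_{ji}: A_j → A_i for j > i. If for all j > i the induced map on G-invariants φ_{ji}^G: A_j^G → A_i^G is surjective, then the natural map H^1(G, lim A_i) → lim H^1(G, A_i) is injective. -/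
/-- Let `G` be a finite group and `{A_i}` an inverse system of `G`-modules
indexed by ℕ such that the induced maps on `G`-invariants are surjective. Then the natural
map `H¹(G, lim A_i) → lim H¹(G, A_i)` is injective: a class of the inverse limit all of whose
projections vanish is zero. -/
theorem stmt1 (G : Type) [Group G] [Finite G]
    (A : ℕ → Type) [∀ n, AddCommGroup (A n)] [∀ n, DistribMulAction G (A n)]
    (φ : ∀ n, A (n + 1) →+ A n)
    (hφ : ∀ (n : ℕ) (g : G) (a : A (n + 1)), φ n (g • a) = g • φ n a)
    (hsurjG : ∀ (n : ℕ) (a : A n), (∀ g : G, g • a = a) →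
      ∃ b : A (n + 1), (∀ g : G, g • b = b) ∧ φ n b = a) :
    ∀ β : @H1 G _ ↥(limSub A φ) _ (limAct G A φ hφ),
      (∀ n, @H1map G _ ↥(limSub A φ) (A n) _ (limAct G A φ hφ) _ _ (limProj A φ n)
        (fun _ _ => rfl) β = 0) → β = 0 := by
  letI := limAct G A φ hφ
  intro β
  induction β using QuotientAddGroup.induction_on with
  | H f =>
    intro hzero
    have hb : ∀ n, ∃ m : A n, ∀ g : G, (f.1 g).1 n = g • m - m := by
      intro n
      have := hzero n
      unfold H1map at this
      rw [QuotientAddGroup.map_mk, QuotientAddGroup.eq_zero_iff,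
        AddSubgroup.mem_addSubgroupOf] at this
      obtain ⟨m, hm⟩ := this
      exact ⟨m, fun g => hm g⟩
    have key : ∀ n (x : A n), (∀ g : G, (f.1 g).1 n = g • x - x) →
        ∃ y : A (n+1), (∀ g : G, (f.1 g).1 (n+1) = g • y - y) ∧ φ n y = x := by
      intro n x hx
      obtain ⟨m, hm⟩ := hb (n+1)
      have hE : ∀ g : G, g • φ n m - φ n m = g • x - x := by
        intro g
        have h1 : φ n ((f.1 g).1 (n+1)) = (f.1 g).1 n := (f.1 g).2 n
        rw [hm g, hx g] at h1
        rw [map_sub, hφ] at h1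
        exact h1
      have hinv : ∀ g : G, g • (φ n m - x) = φ n m - x := by
        intro g
        have := hE g
        rw [smul_sub]
        have : g • φ n m - g • x = φ n m - x := by
          have h2 := hE g
          abel_nf
          abel_nf at h2
          linear_combination (norm := abel) h2
        exact this
      obtain ⟨d, hd1, hd2⟩ := hsurjG n (φ n m - x) hinv
      refine ⟨m - d, fun g => ?_, by rw [map_sub, hd2]; abel⟩
      rw [hm g, smul_sub, hd1 g]
      abel
    let c : ∀ n, {x : A n // ∀ g : G, (f.1 g).1 n = g • x - x} := fun n =>
      Nat.rec ⟨(hb 0).choose, (hb 0).choose_spec⟩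
        (fun n p => ⟨(key n p.1 p.2).choose, (key n p.1 p.2).choose_spec.1⟩) n
    have hcompat : ∀ n, φ n (c (n+1)).1 = (c n).1 := fun n =>
      (key n (c n).1 (c n).2).choose_spec.2
    set b : limSub A φ := ⟨fun n => (c n).1, hcompat⟩ with hbdef
    rw [QuotientAddGroup.eq_zero_iff, AddSubgroup.mem_addSubgroupOf]
    refine ⟨b, fun g => ?_⟩
    refine Subtype.ext (funext fun n => ?_)
    exact (c n).2 g
end

section
/- Let G be a finite group and {A_i} an inverse system of G-modules indexed by ℕ such that all transition maps A_j → A_i are surjective and all induced maps on invariants A_j^G → A_i^G are surjective. Then the natural map H^1(G, lim A_i) → lim H^1(G, A_i) is an isomorphism. -/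
/-- Auxiliary recursion principle: build a sequence in a tower by choice. -/
lemma seq_exists {T : ℕ → Type*} (R : ∀ n, T n → T (n + 1) → Prop) (t0 : T 0)
    (h : ∀ n (t : T n), ∃ t' : T (n + 1), R n t t') :
    ∃ s : ∀ n, T n, s 0 = t0 ∧ ∀ n, R n (s n) (s (n + 1)) := by
  choose f hf using h
  exact ⟨fun n => Nat.rec t0 f n, rfl, fun n => hf n _⟩

lemma H1map_mk {G : Type} [Group G] {M N : Type} [AddCommGroup M] [DistribMulAction G M]
    [AddCommGroup N] [DistribMulAction G N] (φ : M →+ N)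
    (hφ : ∀ (g : G) (m : M), φ (g • m) = g • φ m) (f : zc G M) :
    H1map φ hφ (QuotientAddGroup.mk f) = QuotientAddGroup.mk (zcMap φ hφ f) := rfl

/-- Let `G` be a finite group and `{A_i}` an inverse system of `G`-modules
indexed by ℕ with surjective transition maps and surjective induced maps on `G`-invariants.
Then the natural map `H¹(G, lim A_i) → lim H¹(G, A_i)` is an isomorphism (i.e. it is both
surjective onto the limit of the `H¹(G, A_i)` and injective). -/
theorem stmt2 (G : Type) [Group G] [Finite G]
    (A : ℕ → Type) [∀ n, AddCommGroup (A n)] [∀ n, DistribMulAction G (A n)]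
    (φ : ∀ n, A (n + 1) →+ A n)
    (hφ : ∀ (n : ℕ) (g : G) (a : A (n + 1)), φ n (g • a) = g • φ n a)
    (hsurj : ∀ n, Function.Surjective (φ n))
    (hsurjG : ∀ (n : ℕ) (a : A n), (∀ g : G, g • a = a) →
      ∃ b : A (n + 1), (∀ g : G, g • b = b) ∧ φ n b = a) :
    (∀ α : ∀ n, H1 G (A n), (∀ n, H1map (φ n) (hφ n) (α (n + 1)) = α n) →
      ∃ β : @H1 G _ ↥(limSub A φ) _ (limAct G A φ hφ),
        ∀ n, @H1map G _ ↥(limSub A φ) (A n) _ (limAct G A φ hφ) _ _ (limProj A φ n)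
          (fun _ _ => rfl) β = α n) ∧
    (∀ β : @H1 G _ ↥(limSub A φ) _ (limAct G A φ hφ),
      (∀ n, @H1map G _ ↥(limSub A φ) (A n) _ (limAct G A φ hφ) _ _ (limProj A φ n)
        (fun _ _ => rfl) β = 0) → β = 0) := by
  letI := limAct G A φ hφ
  constructor
  · -- Surjectivity
    intro α hα
    have step : ∀ n (f : zc G (A n)), (QuotientAddGroup.mk f : H1 G (A n)) = α n →
        ∃ f' : zc G (A (n + 1)),
          (QuotientAddGroup.mk f' : H1 G (A (n + 1))) = α (n + 1) ∧
          zcMap (φ n) (hφ n) f' = f := by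
      intro n f hf
      obtain ⟨g, hg⟩ := QuotientAddGroup.mk_surjective (α (n + 1))
      have h1 : (QuotientAddGroup.mk (zcMap (φ n) (hφ n) g) : H1 G (A n)) =
          QuotientAddGroup.mk f := by
        rw [hf, ← hα n, ← hg, H1map_mk]
      rw [QuotientAddGroup.eq_iff_sub_mem, AddSubgroup.mem_addSubgroupOf] at h1
      obtain ⟨m, hm⟩ := h1
      obtain ⟨m', hm'⟩ := hsurj n m
      have hd : (fun γ : G => γ • m' - m') ∈ zc G (A (n + 1)) := by
        intro γ δ
        dsimp only
        rw [mul_smul, smul_sub]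
        abel
      refine ⟨g - ⟨_, hd⟩, ?_, ?_⟩
      · rw [← hg, QuotientAddGroup.eq_iff_sub_mem, AddSubgroup.mem_addSubgroupOf]
        refine ⟨-m', fun γ => ?_⟩
        show (g : G → A (n + 1)) γ - (γ • m' - m') - (g : G → A (n + 1)) γ = γ • (-m') - (-m')
        rw [smul_neg]
        abel
      · ext γ
        have h2 : φ n ((g : G → A (n + 1)) γ) - (f : G → A n) γ = γ • m - m := hm γ
        show φ n ((g : G → A (n + 1)) γ - (γ • m' - m')) = (f : G → A n) γ
        rw [map_sub, map_sub, hφ n, hm', ← h2]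
        abel
    obtain ⟨f0, hf0⟩ := QuotientAddGroup.mk_surjective (α 0)
    obtain ⟨s, -, hs⟩ := seq_exists
      (T := fun n => {f : zc G (A n) // (QuotientAddGroup.mk f : H1 G (A n)) = α n})
      (fun n t t' => zcMap (φ n) (hφ n) t'.1 = t.1) ⟨f0, hf0⟩
      (fun n t => by
        obtain ⟨f', h1, h2⟩ := step n t.1 t.2
        exact ⟨⟨f', h1⟩, h2⟩)
    have hF : (fun γ : G => (⟨fun n => ((s n).1 : G → A n) γ, fun n =>
        congrArg (fun t : zc G (A n) => (t : G → A n) γ) (hs n)⟩ : limSub A φ)) ∈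
        @zc G _ (limSub A φ) _ (limAct G A φ hφ) := by
      intro γ δ
      exact Subtype.ext (funext fun n => (s n).1.2 γ δ)
    refine ⟨QuotientAddGroup.mk ⟨_, hF⟩, fun n => ?_⟩
    erw [H1map_mk]
    have h3 : @zcMap G _ ↥(limSub A φ) (A n) _ (limAct G A φ hφ) _ _ (limProj A φ n)
        (fun _ _ => rfl) ⟨_, hF⟩ = (s n).1 := Subtype.ext (funext fun γ => rfl)
    rw [h3]
    exact (s n).2
  · -- Injectivity
    intro β hβ
    obtain ⟨f, rfl⟩ := QuotientAddGroup.mk_surjective β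
    have hn : ∀ n, ∃ m : A n, ∀ γ : G, ((f : G → limSub A φ) γ : ∀ k, A k) n = γ • m - m := by
      intro n
      have h0 := hβ n
      erw [H1map_mk, QuotientAddGroup.eq_zero_iff, AddSubgroup.mem_addSubgroupOf] at h0
      obtain ⟨m, hm⟩ := h0
      exact ⟨m, fun γ => hm γ⟩
    have step : ∀ n (m : A n), (∀ γ : G, ((f : G → limSub A φ) γ : ∀ k, A k) n = γ • m - m) →
        ∃ m' : A (n + 1),
          (∀ γ : G, ((f : G → limSub A φ) γ : ∀ k, A k) (n + 1) = γ • m' - m') ∧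
          φ n m' = m := by
      intro n m hm
      obtain ⟨m₀, hm₀⟩ := hn (n + 1)
      have hinv : ∀ γ : G, γ • (φ n m₀ - m) = φ n m₀ - m := by
        intro γ
        have h1 : φ n (((f : G → limSub A φ) γ : ∀ k, A k) (n + 1)) =
            ((f : G → limSub A φ) γ : ∀ k, A k) n := ((f : G → limSub A φ) γ).2 n
        rw [hm₀ γ, hm γ, map_sub, hφ n] at h1
        rw [smul_sub, sub_eq_sub_iff_sub_eq_sub]
        exact h1
      obtain ⟨c, hc, hcφ⟩ := hsurjG n (φ n m₀ - m) hinv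
      refine ⟨m₀ - c, fun γ => ?_, ?_⟩
      · rw [hm₀ γ, smul_sub, hc γ]
        abel
      · rw [map_sub, hcφ]
        abel
    obtain ⟨m0, hm0⟩ := hn 0
    obtain ⟨s, -, hs⟩ := seq_exists
      (T := fun n => {m : A n // ∀ γ : G, ((f : G → limSub A φ) γ : ∀ k, A k) n = γ • m - m})
      (fun n t t' => φ n t'.1 = t.1) ⟨m0, hm0⟩
      (fun n t => by
        obtain ⟨m', h1, h2⟩ := step n t.1 t.2
        exact ⟨⟨m', h1⟩, h2⟩)
    rw [QuotientAddGroup.eq_zero_iff, AddSubgroup.mem_addSubgroupOf]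
    refine ⟨⟨fun n => (s n).1, fun n => hs n⟩, fun γ => ?_⟩
    exact Subtype.ext (funext fun n => (s n).2 γ)
end

section
/- For every prime p and every n ≥ 1, if (z_1,…,z_n) = Σ_{i=1}^p (x_{i1},…,x_{in}) is a sum of p Witt vectors of length n over the polynomial ring ℤ[x_{ij}], then for each 1 ≤ ℓ ≤ n there is a polynomial f_ℓ ∈ ℤ[x_{ij} : 1 ≤ i ≤ p, 1 ≤ j ≤ ℓ−1], all of whose monomials have total degree ≥ p, such that z_ℓ = Σ_{i=1}^p x_{iℓ} + f_ℓ. -/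
open MvPolynomial

set_option linter.unusedSectionVars false

namespace Stmt4Aux

set_option linter.unusedSectionVars false

variable {σ : Type*} [DecidableEq σ]

/-- Every monomial of `g` has total degree at least `c`. -/
def MinDeg (c : ℕ) (g : MvPolynomial σ ℤ) : Prop :=
  ∀ m ∈ g.support, c ≤ m.sum fun _ e => e

/-- Every variable occurring in `g` satisfies `P`. -/
def VarsP (P : σ → Prop) (g : MvPolynomial σ ℤ) : Prop :=
  ∀ m ∈ g.support, ∀ v ∈ m.support, P v

theorem degAdd (m₁ m₂ : σ →₀ ℕ) :
    ((m₁ + m₂).sum fun _ e => e) = (m₁.sum fun _ e => e) + m₂.sum fun _ e => e :=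
  Finsupp.sum_add_index' (fun _ => rfl) (fun _ _ _ => rfl)

theorem MinDeg.mono {a b : ℕ} (h : a ≤ b) {g : MvPolynomial σ ℤ} (hg : MinDeg b g) :
    MinDeg a g := fun m hm => h.trans (hg m hm)

theorem MinDeg.add {a : ℕ} {g h : MvPolynomial σ ℤ} (hg : MinDeg a g) (hh : MinDeg a h) :
    MinDeg a (g + h) := fun m hm => by
  rcases Finset.mem_union.mp (MvPolynomial.support_add hm) with h' | h'
  · exact hg m h'
  · exact hh m h'

theorem MinDeg.sub {a : ℕ} {g h : MvPolynomial σ ℤ} (hg : MinDeg a g) (hh : MinDeg a h) :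
    MinDeg a (g - h) := fun m hm => by
  rcases Finset.mem_union.mp (MvPolynomial.support_sub _ g h hm) with h' | h'
  · exact hg m h'
  · exact hh m h'

theorem MinDeg.sum {a : ℕ} {α : Type*} {s : Finset α} {f : α → MvPolynomial σ ℤ}
    (hf : ∀ i ∈ s, MinDeg a (f i)) : MinDeg a (∑ i ∈ s, f i) := fun m hm => by
  obtain ⟨i, hi, hm'⟩ := Finset.mem_biUnion.mp (MvPolynomial.support_sum hm)
  exact hf i hi m hm'

theorem MinDeg.mul {a b : ℕ} {g h : MvPolynomial σ ℤ} (hg : MinDeg a g) (hh : MinDeg b h) :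
    MinDeg (a + b) (g * h) := fun m hm => by
  obtain ⟨m₁, hm₁, m₂, hm₂, rfl⟩ := Finset.mem_add.mp (MvPolynomial.support_mul g h hm)
  rw [degAdd]
  exact Nat.add_le_add (hg m₁ hm₁) (hh m₂ hm₂)

theorem MinDeg.pow {a : ℕ} {g : MvPolynomial σ ℤ} (hg : MinDeg a g) (k : ℕ) :
    MinDeg (k * a) (g ^ k) := by
  induction k with
  | zero => intro m hm; simp
  | succ k ih =>
      rw [pow_succ, Nat.succ_mul]
      exact ih.mul hg

theorem MinDeg.X (v : σ) : MinDeg 1 (X v : MvPolynomial σ ℤ) := by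
  intro m hm
  rw [MvPolynomial.support_X] at hm
  rw [Finset.mem_singleton.mp hm]
  simp

theorem MinDeg.C_mul {a : ℕ} {g : MvPolynomial σ ℤ} (hg : MinDeg a g) (c : ℤ) :
    MinDeg a (C c * g) := fun m hm => by
  apply hg m
  rw [MvPolynomial.mem_support_iff] at hm ⊢
  intro h0
  rw [coeff_C_mul, h0, mul_zero] at hm
  exact hm rfl

theorem VarsP.mono {P Q : σ → Prop} (h : ∀ v, P v → Q v) {g : MvPolynomial σ ℤ}
    (hg : VarsP P g) : VarsP Q g := fun m hm v hv => h v (hg m hm v hv)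

theorem VarsP.add {P : σ → Prop} {g h : MvPolynomial σ ℤ} (hg : VarsP P g) (hh : VarsP P h) :
    VarsP P (g + h) := fun m hm => by
  rcases Finset.mem_union.mp (MvPolynomial.support_add hm) with h' | h'
  · exact hg m h'
  · exact hh m h'

theorem VarsP.sub {P : σ → Prop} {g h : MvPolynomial σ ℤ} (hg : VarsP P g) (hh : VarsP P h) :
    VarsP P (g - h) := fun m hm => by
  rcases Finset.mem_union.mp (MvPolynomial.support_sub _ g h hm) with h' | h'
  · exact hg m h'
  · exact hh m h'

theorem VarsP.sum {P : σ → Prop} {α : Type*} {s : Finset α} {f : α → MvPolynomial σ ℤ}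
    (hf : ∀ i ∈ s, VarsP P (f i)) : VarsP P (∑ i ∈ s, f i) := fun m hm => by
  obtain ⟨i, hi, hm'⟩ := Finset.mem_biUnion.mp (MvPolynomial.support_sum hm)
  exact hf i hi m hm'

theorem VarsP.mul {P : σ → Prop} {g h : MvPolynomial σ ℤ} (hg : VarsP P g) (hh : VarsP P h) :
    VarsP P (g * h) := fun m hm v hv => by
  obtain ⟨m₁, hm₁, m₂, hm₂, rfl⟩ := Finset.mem_add.mp (MvPolynomial.support_mul g h hm)
  rcases Finset.mem_union.mp (Finsupp.support_add hv) with h' | h'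
  · exact hg m₁ hm₁ v h'
  · exact hh m₂ hm₂ v h'

theorem VarsP.pow {P : σ → Prop} {g : MvPolynomial σ ℤ} (hg : VarsP P g) (k : ℕ) :
    VarsP P (g ^ k) := by
  induction k with
  | zero =>
      intro m hm
      rw [pow_zero, MvPolynomial.mem_support_iff, MvPolynomial.coeff_one] at hm
      have hm0 : m = 0 := by by_contra hne; simp [Ne.symm hne] at hm
      subst hm0
      simp
  | succ k ih => rw [pow_succ]; exact ih.mul hg

theorem VarsP.X {P : σ → Prop} {v : σ} (h : P v) : VarsP P (X v : MvPolynomial σ ℤ) := by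
  intro m hm w hw
  rw [MvPolynomial.support_X, Finset.mem_singleton] at hm
  subst hm
  rw [Finsupp.mem_support_iff, Finsupp.single_apply_ne_zero] at hw
  rw [hw.1]; exact h

theorem VarsP.C_mul {P : σ → Prop} {g : MvPolynomial σ ℤ} (hg : VarsP P g) (c : ℤ) :
    VarsP P (C c * g) := fun m hm => by
  apply hg m
  rw [MvPolynomial.mem_support_iff] at hm ⊢
  intro h0
  rw [coeff_C_mul, h0, mul_zero] at hm
  exact hm rfl


theorem main (p n : ℕ) [Fact p.Prime]
    (y : Fin p → WittVector p (MvPolynomial (Fin p × Fin n) ℤ))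
    (hy : ∀ (i : Fin p) (k : ℕ) (h : k < n), (y i).coeff k = X (i, ⟨k, h⟩)) :
    ∀ ℓ : ℕ, (hℓ : ℓ < n) →
      MinDeg p ((∑ i, y i).coeff ℓ - ∑ i : Fin p, X (i, (⟨ℓ, hℓ⟩ : Fin n))) ∧
      VarsP (fun v => (v.2 : ℕ) < ℓ)
        ((∑ i, y i).coeff ℓ - ∑ i : Fin p, X (i, (⟨ℓ, hℓ⟩ : Fin n))) := by
  intro ℓ hℓ
  have IH : ∀ k, k < ℓ → ∀ hkn : k < n,
      MinDeg p ((∑ i, y i).coeff k - ∑ i : Fin p, X (i, (⟨k, hkn⟩ : Fin n))) ∧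
      VarsP (fun v => (v.2 : ℕ) < k)
        ((∑ i, y i).coeff k - ∑ i : Fin p, X (i, (⟨k, hkn⟩ : Fin n))) :=
    fun k _ hkn => main p n y hy k hkn
  have hp2 : 2 ≤ p := (Fact.out : p.Prime).two_le
  have hp1 : 1 ≤ p := le_trans (by norm_num) hp2
  set z : ℕ → MvPolynomial (Fin p × Fin n) ℤ := fun k => (∑ i, y i).coeff k with hzdef
  have hCpow : ∀ k : ℕ, ((p : MvPolynomial (Fin p × Fin n) ℤ) ^ k) = C ((p : ℤ) ^ k) := by
    intro k; rw [map_pow, map_natCast]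
  -- ghost identity
  have h1 : (WittVector.ghostComponent (p := p) ℓ) (∑ i, y i)
      = ∑ i, (WittVector.ghostComponent (p := p) ℓ) (y i) := map_sum _ _ _
  simp only [WittVector.ghostComponent_apply, aeval_wittPolynomial] at h1
  rw [Finset.sum_comm] at h1
  have h1' : ∑ k ∈ Finset.range (ℓ+1), (p : MvPolynomial (Fin p × Fin n) ℤ)^k * (z k)^(p^(ℓ-k))
      = ∑ k ∈ Finset.range (ℓ+1), (p : MvPolynomial (Fin p × Fin n) ℤ)^k * (∑ i : Fin p, ((y i).coeff k)^(p^(ℓ-k))) := by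
    rw [h1]
    exact Finset.sum_congr rfl fun k _ => (Finset.mul_sum _ _ _).symm
  rw [Finset.sum_range_succ, Finset.sum_range_succ] at h1'
  simp only [Nat.sub_self, pow_zero, pow_one] at h1'
  have h3 : ∑ k ∈ Finset.range ℓ, (p : MvPolynomial (Fin p × Fin n) ℤ)^k *
        ((∑ i : Fin p, ((y i).coeff k)^(p^(ℓ-k))) - (z k)^(p^(ℓ-k)))
      = (∑ k ∈ Finset.range ℓ, (p : MvPolynomial (Fin p × Fin n) ℤ)^k * (∑ i : Fin p, ((y i).coeff k)^(p^(ℓ-k))))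
        - ∑ k ∈ Finset.range ℓ, (p : MvPolynomial (Fin p × Fin n) ℤ)^k * (z k)^(p^(ℓ-k)) := by
    rw [← Finset.sum_sub_distrib]
    exact Finset.sum_congr rfl fun k _ => mul_sub _ _ _
  have key : (p : MvPolynomial (Fin p × Fin n) ℤ)^ℓ * (z ℓ - ∑ i : Fin p, X (i, (⟨ℓ, hℓ⟩ : Fin n)))
      = ∑ k ∈ Finset.range ℓ, (p : MvPolynomial (Fin p × Fin n) ℤ)^k *
          ((∑ i : Fin p, ((y i).coeff k)^(p^(ℓ-k))) - (z k)^(p^(ℓ-k))) := by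
    rw [h3]
    have hsl : (∑ i : Fin p, X (i, (⟨ℓ, hℓ⟩ : Fin n)) : MvPolynomial (Fin p × Fin n) ℤ) = ∑ i, (y i).coeff ℓ :=
      Finset.sum_congr rfl fun i _ => (hy i ℓ hℓ).symm
    rw [hsl]
    linear_combination h1'
  -- properties of the RHS
  have hzk : ∀ k, k < ℓ → ∀ hkn : k < n,
      MinDeg 1 (z k) ∧ VarsP (fun v => (v.2 : ℕ) ≤ k) (z k) := by
    intro k hk hkn
    obtain ⟨hd, hv⟩ := IH k hk hkn
    have hz : z k = (z k - ∑ i : Fin p, X (i, (⟨k, hkn⟩ : Fin n)))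
        + ∑ i : Fin p, X (i, (⟨k, hkn⟩ : Fin n)) := (sub_add_cancel _ _).symm
    constructor
    · rw [hz]
      exact (hd.mono hp1).add (MinDeg.sum fun i _ => MinDeg.X _)
    · rw [hz]
      exact (hv.mono fun v h => le_of_lt h).add
        (VarsP.sum fun i _ => VarsP.X (le_refl k))
  have hrhsD : MinDeg p (∑ k ∈ Finset.range ℓ, (p : MvPolynomial (Fin p × Fin n) ℤ)^k *
      ((∑ i : Fin p, ((y i).coeff k)^(p^(ℓ-k))) - (z k)^(p^(ℓ-k)))) := by
    apply MinDeg.sum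
    intro k hk
    rw [Finset.mem_range] at hk
    have hkn : k < n := lt_trans hk hℓ
    have hm : ℓ - k ≠ 0 := Nat.sub_ne_zero_of_lt hk
    have hple : p ≤ p ^ (ℓ - k) := Nat.le_self_pow hm p
    rw [hCpow]
    apply MinDeg.C_mul
    apply MinDeg.sub
    · apply MinDeg.sum
      intro i _
      rw [hy i k hkn]
      have h1x : MinDeg (p ^ (ℓ - k) * 1)
          ((X (i, (⟨k, hkn⟩ : Fin n)) : MvPolynomial (Fin p × Fin n) ℤ) ^ p ^ (ℓ - k)) :=
        (MinDeg.X _).pow _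
      exact h1x.mono (by simpa using hple)
    · have h2x : MinDeg (p ^ (ℓ - k) * 1) ((z k) ^ p ^ (ℓ - k)) :=
        ((hzk k hk hkn).1).pow _
      exact h2x.mono (by simpa using hple)
  have hrhsV : VarsP (fun v : Fin p × Fin n => (v.2 : ℕ) < ℓ)
      (∑ k ∈ Finset.range ℓ, (p : MvPolynomial (Fin p × Fin n) ℤ)^k *
      ((∑ i : Fin p, ((y i).coeff k)^(p^(ℓ-k))) - (z k)^(p^(ℓ-k)))) := by
    apply VarsP.sum
    intro k hk
    rw [Finset.mem_range] at hk
    have hkn : k < n := lt_trans hk hℓ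
    rw [hCpow]
    apply VarsP.C_mul
    apply VarsP.sub
    · apply VarsP.sum
      intro i _
      rw [hy i k hkn]
      exact (VarsP.X (by simpa using hk)).pow _
    · exact (((hzk k hk hkn).2.mono fun v hv => lt_of_le_of_lt hv hk).pow _)
  -- transfer support through multiplication by p^ℓ
  have hsub : ∀ m, m ∈ (z ℓ - ∑ i : Fin p, X (i, (⟨ℓ, hℓ⟩ : Fin n))).support →
      m ∈ ((p : MvPolynomial (Fin p × Fin n) ℤ)^ℓ * (z ℓ - ∑ i : Fin p, X (i, (⟨ℓ, hℓ⟩ : Fin n)))).support := by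
    intro m hm
    rw [MvPolynomial.mem_support_iff] at hm ⊢
    rw [hCpow, coeff_C_mul]
    exact mul_ne_zero (pow_ne_zero _ (by exact_mod_cast Nat.Prime.ne_zero Fact.out)) hm
  constructor
  · intro m hm
    have := hsub m hm
    rw [key] at this
    exact hrhsD m this
  · intro m hm
    have := hsub m hm
    rw [key] at this
    exact hrhsV m this
termination_by ℓ => ℓ
decreasing_by exact ‹_ < ℓ›

end Stmt4Aux


/-- Consider the universal sum of `p` Witt vectors of length `n`: over the
polynomial ring `ℤ[x_{ij} : 1 ≤ i ≤ p, 1 ≤ j ≤ n]`, let `x i` be the Witt vector with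
coordinates `(x_{i1}, …, x_{in})` and `z = Σ_{i=1}^p x i`. Then for each coordinate `ℓ`
there is a polynomial `f_ℓ` involving only the variables `x_{ij}` with `j ≤ ℓ − 1`, all of
whose monomials have total degree `≥ p`, such that `z_ℓ = Σ_{i=1}^p x_{iℓ} + f_ℓ`. -/
theorem stmt4 (p n : ℕ) [Fact p.Prime]
    (x : Fin p → TruncatedWittVector p n (MvPolynomial (Fin p × Fin n) ℤ))
    (hx : ∀ (i : Fin p) (j : Fin n), (x i).coeff j = X (i, j))
    (ℓ : Fin n) :
    ∃ f : MvPolynomial (Fin p × Fin n) ℤ,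
      (∑ i, x i).coeff ℓ = (∑ i : Fin p, X (i, ℓ)) + f ∧
      (∀ m ∈ f.support, p ≤ m.sum fun _ e => e) ∧
      (∀ m ∈ f.support, ∀ v ∈ m.support, (v.2 : ℕ) < (ℓ : ℕ)) := by
  classical
  set y : Fin p → WittVector p (MvPolynomial (Fin p × Fin n) ℤ) :=
    fun i => WittVector.mk p (fun j => if h : j < n then X (i, ⟨j, h⟩) else 0) with hydef
  have hy : ∀ (i : Fin p) (k : ℕ) (h : k < n), (y i).coeff k = X (i, ⟨k, h⟩) := by
    intro i k h
    show (WittVector.mk p _).coeff k = _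
    rw [WittVector.coeff_mk]
    exact dif_pos h
  obtain ⟨hd, hv⟩ := Stmt4Aux.main p n y hy ℓ ℓ.isLt
  have htr : ∀ i, WittVector.truncate n (y i) = x i := by
    intro i
    apply TruncatedWittVector.ext
    intro j
    rw [WittVector.coeff_truncate, hx]
    simpa using hy i j j.isLt
  have hsum : (∑ i, x i) = WittVector.truncate n (∑ i, y i) := by
    rw [map_sum]
    exact (Finset.sum_congr rfl fun i _ => (htr i).symm)
  refine ⟨(∑ i, y i).coeff ℓ - ∑ i : Fin p, X (i, ℓ), ?_, ?_, ?_⟩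
  · rw [hsum, WittVector.coeff_truncate]
    ring
  · intro m hm
    exact hd m (by simpa using hm)
  · intro m hm
    exact hv m (by simpa using hm)
end

section
/- Let L/K be a totally ramified cyclic extension of degree p of complete discrete valuation fields of characteristic 0 with residue characteristic p, and let e_K = v_K(p) be the absolute ramification index. For all a ∈ O_L, v_K(tr_{L/K}(a^p) − tr_{L/K}(a)^p) = e_K + v_L(a). -/
noncomputable section

/-- The value group `ℤₘ₀ = ℤ ∪ {0}` (multiplicative notation) of a normalized discrete
valuation. -/
abbrev Zm0 : Type := WithZero (Multiplicative ℤ)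

/-- The element of `ℤₘ₀` corresponding to additive valuation value `-n`; an element `x` has
(additive, normalized) valuation `n` iff the multiplicative valuation satisfies
`w x = oa (-n)`. -/
def oa (n : ℤ) : Zm0 := (Multiplicative.ofAdd n : Multiplicative ℤ)

open scoped NNReal


lemma oa_ne_zero (n : ℤ) : oa n ≠ 0 := WithZero.coe_ne_zero

lemma oa_pos (n : ℤ) : 0 < oa n := WithZero.zero_lt_coe _

lemma oa_le_oa {m n : ℤ} : oa m ≤ oa n ↔ m ≤ n := by
  rw [oa, oa, WithZero.coe_le_coe, Multiplicative.ofAdd_le]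

lemma oa_lt_oa {m n : ℤ} : oa m < oa n ↔ m < n := by
  rw [oa, oa, WithZero.coe_lt_coe, Multiplicative.ofAdd_lt]

lemma oa_inj {m n : ℤ} (h : oa m = oa n) : m = n :=
  le_antisymm (oa_le_oa.1 h.le) (oa_le_oa.1 h.ge)

lemma oa_mul (m n : ℤ) : oa m * oa n = oa (m + n) := by
  rw [oa, oa, oa, ← WithZero.coe_mul, ← ofAdd_add]

lemma oa_zero : oa 0 = 1 := rfl

lemma oa_pow (t : ℕ) (n : ℤ) : oa n ^ t = oa (t * n) := by
  induction t with
  | zero => simp [oa_zero]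
  | succ t ih =>
      rw [pow_succ, ih, oa_mul]
      congr 1
      push_cast
      ring

lemma exists_oa {x : Zm0} (hx : x ≠ 0) : ∃ n : ℤ, x = oa n := by
  lift x to Multiplicative ℤ using hx
  exact ⟨Multiplicative.toAdd x, rfl⟩

lemma oa_le_one {n : ℤ} : oa n ≤ 1 ↔ n ≤ 0 := by
  rw [show (1 : Zm0) = oa 0 from rfl, oa_le_oa]

lemma zm0_pow_le_pow {x y : Zm0} {t : ℕ} (ht : t ≠ 0) (h : x ^ t ≤ y ^ t) : x ≤ y := by
  rcases eq_or_ne y 0 with rfl | hy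
  · rw [zero_pow ht, le_zero_iff, pow_eq_zero_iff ht] at h
    simp [h]
  rcases eq_or_ne x 0 with rfl | hx
  · exact zero_le'
  obtain ⟨m, rfl⟩ := exists_oa hx
  obtain ⟨n, rfl⟩ := exists_oa hy
  rw [oa_pow, oa_pow, oa_le_oa] at h
  rw [oa_le_oa]
  exact le_of_mul_le_mul_left h (by positivity)

lemma zm0_pow_inj {x y : Zm0} {t : ℕ} (ht : t ≠ 0) (h : x ^ t = y ^ t) : x = y :=
  le_antisymm (zm0_pow_le_pow ht h.le) (zm0_pow_le_pow ht h.ge)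

/-- Valuation of a natural number is at most 1. -/
lemma val_natCast_le_one {R : Type*} [CommRing R] {Γ : Type*}
    [LinearOrderedCommGroupWithZero Γ] (v : Valuation R Γ) (n : ℕ) : v (n : R) ≤ 1 := by
  induction n with
  | zero => simp
  | succ n ih =>
      push_cast
      exact le_trans (v.map_add _ _) (max_le ih (le_of_eq v.map_one))

lemma val_intCast_le_one {R : Type*} [CommRing R] {Γ : Type*}
    [LinearOrderedCommGroupWithZero Γ] (v : Valuation R Γ) (n : ℤ) : v (n : R) ≤ 1 := by
  obtain ⟨m, rfl | rfl⟩ := Int.eq_nat_or_neg n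
  · rw [Int.cast_natCast]; exact val_natCast_le_one v m
  · rw [Int.cast_neg, Valuation.map_neg, Int.cast_natCast]; exact val_natCast_le_one v m

/-- Decomposition of a sum over a finset invariant under a free action of a finite group
into orbit sums. -/
lemma free_action_sum {G X M : Type*} [Group G] [Fintype G] [DecidableEq X] [AddCommMonoid M]
    (act : G → X → X) (hone : ∀ x, act 1 x = x)
    (hmul : ∀ τ σ x, act (τ * σ) x = act τ (act σ x))
    (S : Finset X) (hinv : ∀ τ x, x ∈ S → act τ x ∈ S)
    (hfree : ∀ x ∈ S, ∀ τ, act τ x = x → τ = 1) (f : X → M) :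
    ∃ T : Finset X, T ⊆ S ∧ ∑ x ∈ S, f x = ∑ t ∈ T, ∑ τ : G, f (act τ t) := by
  classical
  induction S using Finset.strongInduction with
  | _ S ih =>
    rcases S.eq_empty_or_nonempty with rfl | ⟨x₀, hx₀⟩
    · exact ⟨∅, by simp⟩
    · have horb_inj : Function.Injective (fun τ : G => act τ x₀) := by
        intro τ σ h
        simp only at h
        have : act (σ⁻¹ * τ) x₀ = x₀ := by
          rw [hmul, h, ← hmul, inv_mul_cancel, hone]
        exact (inv_mul_eq_one.mp (hfree x₀ hx₀ _ this)).symm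
      set O : Finset X := Finset.image (fun τ : G => act τ x₀) Finset.univ with hO
      have hOS : O ⊆ S := by
        intro y hy
        simp only [hO, Finset.mem_image] at hy
        obtain ⟨τ, -, rfl⟩ := hy
        exact hinv τ x₀ hx₀
      have hx₀O : x₀ ∈ O := by
        simp only [hO, Finset.mem_image]
        exact ⟨1, Finset.mem_univ _, hone x₀⟩
      have hss : S \ O ⊂ S := Finset.sdiff_ssubset hOS ⟨x₀, hx₀O⟩
      have hinv' : ∀ τ x, x ∈ S \ O → act τ x ∈ S \ O := by
        intro τ x hx
        rw [Finset.mem_sdiff] at hx ⊢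
        refine ⟨hinv τ x hx.1, fun hc => hx.2 ?_⟩
        simp only [hO, Finset.mem_image] at hc ⊢
        obtain ⟨σ, -, hσ⟩ := hc
        refine ⟨τ⁻¹ * σ, Finset.mem_univ _, ?_⟩
        rw [hmul, hσ, ← hmul, inv_mul_cancel, hone]
      have hfree' : ∀ x ∈ S \ O, ∀ τ, act τ x = x → τ = 1 := fun x hx =>
        hfree x (Finset.mem_sdiff.1 hx).1
      obtain ⟨T', hT'sub, hT'⟩ := ih (S \ O) hss hinv' hfree'
      have hx₀T' : x₀ ∉ T' := fun hc => (Finset.mem_sdiff.1 (hT'sub hc)).2 hx₀O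
      refine ⟨insert x₀ T', ?_, ?_⟩
      · intro t ht
        rcases Finset.mem_insert.1 ht with rfl | ht
        · exact hx₀
        · exact (Finset.mem_sdiff.1 (hT'sub ht)).1
      · rw [Finset.sum_insert hx₀T', ← hT']
        have horb : ∑ τ : G, f (act τ x₀) = ∑ y ∈ O, f y := by
          rw [hO, Finset.sum_image (fun a _ b _ h => horb_inj h)]
        rw [horb, ← Finset.sum_sdiff hOS, add_comm]

lemma oa_inv (n : ℤ) : (oa n)⁻¹ = oa (-n) := by
  have h : oa n * oa (-n) = 1 := by rw [oa_mul, add_neg_cancel, oa_zero]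
  exact inv_eq_of_mul_eq_one_right h

lemma oa_zpow (t : ℤ) (n : ℤ) : oa n ^ t = oa (t * n) := by
  cases t with
  | ofNat k => simp only [Int.ofNat_eq_coe, zpow_natCast, oa_pow]
  | negSucc k =>
      rw [zpow_negSucc, oa_pow, oa_inv]
      congr 1
      simp [Int.negSucc_eq]
      ring

lemma toNNReal_base_pow (p : ℕ) (hp0 : p ≠ 0) {e : ℝ≥0} (he : e ≠ 0) (x : Zm0) :
    WithZeroMulInt.toNNReal (pow_ne_zero p he) x = WithZeroMulInt.toNNReal he (x ^ p) := by
  rcases eq_or_ne x 0 with rfl | hx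
  · rw [map_zero, zero_pow hp0, map_zero]
  obtain ⟨n, rfl⟩ := exists_oa hx
  rw [WithZeroMulInt.toNNReal_neg_apply _ (oa_ne_zero n), oa_pow,
      WithZeroMulInt.toNNReal_neg_apply _ (oa_ne_zero _)]
  have h1 : (WithZero.unzero (oa_ne_zero n)) = Multiplicative.ofAdd n := by
    rw [← WithZero.coe_inj, WithZero.coe_unzero]; rfl
  have h2 : (WithZero.unzero (oa_ne_zero ((p : ℤ) * n))) = Multiplicative.ofAdd ((p : ℤ) * n) := by
    rw [← WithZero.coe_inj, WithZero.coe_unzero]; rfl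
  rw [h1, h2, toAdd_ofAdd, toAdd_ofAdd, ← zpow_natCast e p, ← zpow_mul]

lemma sigma_invariance (p : ℕ) (hp0 : p ≠ 0) (K L : Type) [Field K] [Field L] [Algebra K L]
    [FiniteDimensional K L]
    (wK : Valuation K Zm0) (wL : Valuation L Zm0)
    (hwK : Function.Surjective wK) (hwL : Function.Surjective wL)
    (hKcomplete : @CompleteSpace K (Valued.mk' wK).toUniformSpace)
    (hext : ∀ x : K, wL (algebraMap K L x) = wK x ^ p) :
    ∀ (τ : L ≃ₐ[K] L) (x : L), wL (τ x) = wL x := by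
  have h2 : (1 : ℝ≥0) < 2 := one_lt_two
  have h2p : (1 : ℝ≥0) < 2 ^ p := one_lt_pow₀ h2 hp0
  letI valK : Valued K Zm0 := Valued.mk' wK
  letI valL : Valued L Zm0 := Valued.mk' wL
  letI rkK : Valuation.RankOne (Valued.v : Valuation K Zm0) :=
    { hom' := (WithZeroMulInt.toNNReal (pow_ne_zero p (two_ne_zero))).comp
        MonoidWithZeroHom.ValueGroup₀.embedding
      strictMono' := (WithZeroMulInt.toNNReal_strictMono h2p).comp
        MonoidWithZeroHom.ValueGroup₀.embedding_strictMono
      exists_val_nontrivial := by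
        obtain ⟨x, hx⟩ := hwK (oa (-1))
        refine ⟨x, ?_, ?_⟩
        · show wK x ≠ 0
          rw [hx]; exact oa_ne_zero _
        · show wK x ≠ 1
          rw [hx, ← oa_zero]
          intro h; exact absurd (oa_inj h) (by norm_num) }
  letI rkL : Valuation.RankOne (Valued.v : Valuation L Zm0) :=
    { hom' := (WithZeroMulInt.toNNReal (two_ne_zero)).comp
        MonoidWithZeroHom.ValueGroup₀.embedding
      strictMono' := (WithZeroMulInt.toNNReal_strictMono h2).comp
        MonoidWithZeroHom.ValueGroup₀.embedding_strictMono
      exists_val_nontrivial := by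
        obtain ⟨x, hx⟩ := hwL (oa (-1))
        refine ⟨x, ?_, ?_⟩
        · show wL x ≠ 0
          rw [hx]; exact oa_ne_zero _
        · show wL x ≠ 1
          rw [hx, ← oa_zero]
          intro h; exact absurd (oa_inj h) (by norm_num) }
  letI nfK : NontriviallyNormedField K := Valued.toNontriviallyNormedField K Zm0
  letI nfL : NontriviallyNormedField L := Valued.toNontriviallyNormedField L Zm0
  haveI : CompleteSpace K := hKcomplete
  have hnormmap : ∀ c : K, ‖algebraMap K L c‖ = ‖c‖ := by
    intro c
    show ((WithZeroMulInt.toNNReal (two_ne_zero) (MonoidWithZeroHom.ValueGroup₀.embedding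
        ((Valued.v : Valuation L Zm0).restrict (algebraMap K L c))) : ℝ≥0) : ℝ)
      = ((WithZeroMulInt.toNNReal (pow_ne_zero p (two_ne_zero)) (MonoidWithZeroHom.ValueGroup₀.embedding
        ((Valued.v : Valuation K Zm0).restrict c)) : ℝ≥0) : ℝ)
    rw [Valuation.embedding_restrict, Valuation.embedding_restrict]
    show ((WithZeroMulInt.toNNReal (two_ne_zero) (wL (algebraMap K L c)) : ℝ≥0) : ℝ)
      = ((WithZeroMulInt.toNNReal (pow_ne_zero p (two_ne_zero)) (wK c) : ℝ≥0) : ℝ)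
    rw [hext c, toNNReal_base_pow p hp0]
  letI nsKL : NormedSpace K L :=
    { (inferInstance : Module K L) with
      norm_smul_le := fun c x => by
        rw [Algebra.smul_def, norm_mul, hnormmap c] }
  have key : ∀ (τ : L ≃ₐ[K] L) (y : L), wL y < 1 → wL (τ y) < 1 := by
    intro τ y hy
    haveI hcsmul : ContinuousSMul K L := IsBoundedSMul.continuousSMul
    have hcont : Continuous (τ.toLinearMap : L →ₗ[K] L) :=
      LinearMap.continuous_of_finiteDimensional _
    have hnorm : ‖y‖ < 1 := by
      rw [Valued.toNormedField.norm_lt_one_iff]; exact hy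
    have htend : Filter.Tendsto (fun n => y ^ n) Filter.atTop (nhds 0) :=
      tendsto_pow_atTop_nhds_zero_of_norm_lt_one hnorm
    have htend2 : Filter.Tendsto (fun n => (τ y) ^ n) Filter.atTop (nhds 0) := by
      have h := (hcont.tendsto 0).comp htend
      have h0 : (τ.toLinearMap : L →ₗ[K] L) 0 = 0 := map_zero _
      rw [h0] at h
      convert h using 2 with n
      show (τ y) ^ n = τ.toLinearMap (y ^ n)
      show (τ y) ^ n = τ (y ^ n)
      rw [map_pow]
    by_contra hge
    push_neg at hge
    have hn1 : (1:ℝ) ≤ ‖τ y‖ := by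
      rw [show (1:ℝ) = ‖(1:L)‖ by simp, Valued.toNormedField.norm_le_iff]
      show wL 1 ≤ wL (τ y)
      rw [map_one]; exact hge
    have htn : Filter.Tendsto (fun n => ‖(τ y) ^ n‖) Filter.atTop (nhds 0) := by
      simpa using htend2.norm
    obtain ⟨n, hn⟩ := (htn.eventually (gt_mem_nhds (by norm_num : (0:ℝ) < 1))).exists
    rw [norm_pow] at hn
    exact absurd hn (not_lt.2 (one_le_pow₀ hn1))
  have key2 : ∀ (τ : L ≃ₐ[K] L) (y : L), wL (τ y) < 1 ↔ wL y < 1 := by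
    intro τ y
    refine ⟨fun h => ?_, key τ y⟩
    have := key τ.symm _ h
    rwa [AlgEquiv.symm_apply_apply] at this
  -- now pure valuation theory
  intro τ x
  rcases eq_or_ne x 0 with rfl | hx0
  · rw [map_zero, map_zero]
  obtain ⟨π, hπ⟩ := hwL (oa (-1))
  have hπ0 : π ≠ 0 := by
    intro h; rw [h, map_zero] at hπ; exact (oa_ne_zero _) hπ.symm
  have hτπlt : wL (τ π) < 1 := (key2 τ π).2 (by rw [hπ, ← oa_zero, oa_lt_oa]; norm_num)
  have hτπ0 : wL (τ π) ≠ 0 := by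
    simp only [ne_eq, Valuation.zero_iff]
    intro h
    exact hπ0 (by simpa using congrArg τ.symm h)
  obtain ⟨m', hm'⟩ := exists_oa hτπ0
  have hm'le : m' ≤ -1 := by
    rw [hm', ← oa_zero, oa_lt_oa] at hτπlt; omega
  have hunit : ∀ u : L, wL u = 1 → wL (τ u) = 1 := by
    intro u hu
    have hu0 : u ≠ 0 := by intro h; rw [h, map_zero] at hu; exact zero_ne_one hu
    have h1 : ¬ wL (τ u) < 1 := by rw [key2, hu]; exact lt_irrefl _
    have h2 : ¬ wL (τ u)⁻¹ < 1 := by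
      rw [← map_inv₀ τ, key2, map_inv₀, hu, inv_one]
      exact lt_irrefl _
    have hτu0 : wL (τ u) ≠ 0 := by
      simp only [ne_eq, Valuation.zero_iff]
      intro h
      exact hu0 (by simpa using congrArg τ.symm h)
    obtain ⟨k, hk⟩ := exists_oa hτu0
    rw [hk, ← oa_zero, oa_lt_oa] at h1
    rw [map_inv₀, hk, oa_inv, ← oa_zero, oa_lt_oa] at h2
    rw [hk, ← oa_zero]
    congr 1
    omega
  have hgen : ∀ (y : L), y ≠ 0 → ∀ k : ℤ, wL y = oa k → wL (τ y) = oa (-(k * m')) := by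
    intro y hy0 k hk
    set u : L := y * π ^ k with hu
    have hu1 : wL u = 1 := by
      rw [hu, map_mul, map_zpow₀, hk, hπ, oa_zpow, oa_mul]
      rw [show k + k * -1 = 0 by ring, oa_zero]
    have hy : y = u * π ^ (-k) := by
      rw [hu, zpow_neg, mul_assoc, mul_inv_cancel₀ (zpow_ne_zero _ hπ0), mul_one]
    have hτy : τ y = τ u * (τ π) ^ (-k) := by rw [hy, map_mul, map_zpow₀]
    rw [hτy, map_mul, hunit u hu1, one_mul, map_zpow₀, hm', oa_zpow]
    congr 1
    ring
  -- surjectivity forces m' = -1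
  obtain ⟨z', hz'⟩ := hwL (oa (-1))
  set z := τ.symm z' with hz
  have hz0 : z ≠ 0 := by
    intro h
    have : z' = 0 := by simpa [hz] using congrArg τ h
    rw [this, map_zero] at hz'
    exact (oa_ne_zero _) hz'.symm
  have hzval : wL (τ z) = oa (-1) := by rw [hz, AlgEquiv.apply_symm_apply, hz']
  have hz0w : wL z ≠ 0 := by simpa [Valuation.zero_iff] using hz0
  obtain ⟨k, hk⟩ := exists_oa hz0w
  have := hgen z hz0 k hk
  rw [hzval] at this
  have hkm : -(k * m') = -1 := oa_inj this.symm
  have hm'1 : m' = -1 := by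
    have h1 : m' * k = 1 := by rw [mul_comm]; omega
    rcases Int.isUnit_iff.mp (IsUnit.of_mul_eq_one (a := m') k h1) with h | h <;> omega
  obtain ⟨n, hn⟩ := exists_oa (show wL x ≠ 0 by simpa [Valuation.zero_iff] using hx0)
  rw [hn, hgen x hx0 n hn, hm'1]
  congr 1
  ring

/-- Ultrametric sum with a strictly dominant term. -/
lemma val_sum_eq_of_max {F ι : Type*} [Field F] (w : Valuation F Zm0) (s : Finset ι)
    (f : ι → F) (i₀ : ι) (hi₀ : i₀ ∈ s) (h0 : w (f i₀) ≠ 0)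
    (hmax : ∀ j ∈ s, j ≠ i₀ → w (f j) < w (f i₀)) :
    w (∑ j ∈ s, f j) = w (f i₀) := by
  classical
  rw [← Finset.add_sum_erase s f hi₀]
  rcases (s.erase i₀).eq_empty_or_nonempty with he | _
  · rw [he, Finset.sum_empty, add_zero]
  · exact Valuation.map_add_eq_of_lt_left _ (Valuation.map_sum_lt _ h0
      (fun j hj => hmax j (Finset.mem_of_mem_erase hj) (Finset.ne_of_mem_erase hj)))

section Approx

variable (p : ℕ) (K L : Type) [Field K] [Field L] [Algebra K L]
    [FiniteDimensional K L]
    (wK : Valuation K Zm0) (wL : Valuation L Zm0)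

/-- Valuation of `c • π^i`-type elements. -/
lemma val_term (hext : ∀ x : K, wL (algebraMap K L x) = wK x ^ p)
    {π : L} (hπ : wL π = oa (-1)) {c : K} {vc : ℤ} (hc : wK c = oa vc) (i : ℕ) :
    wL (c • π ^ i) = oa (p * vc - i) := by
  rw [Algebra.smul_def, map_mul, hext, hc, map_pow, hπ, oa_pow, oa_pow, oa_mul]
  congr 1
  push_cast
  ring

set_option maxHeartbeats 1000000 in
/-- residue degree 1: every integral element is congruent to a constant mod the maximal ideal. -/
lemma approx_const (hp : p.Prime) (hdeg : Module.finrank K L = p)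
    (hwL : Function.Surjective wL)
    (hext : ∀ x : K, wL (algebraMap K L x) = wK x ^ p) :
    ∀ x : L, wL x ≤ 1 → ∃ c : K, wK c ≤ 1 ∧ wL (x - algebraMap K L c) ≤ oa (-1) := by
  classical
  obtain ⟨π, hπ⟩ := hwL (oa (-1))
  haveI : Nonempty (Fin p) := ⟨⟨0, hp.pos⟩⟩
  -- distinct valuations of nonzero terms
  have hdist : ∀ (g : Fin p → K) (i j : Fin p), g i ≠ 0 → g j ≠ 0 → i ≠ j →
      wL (g i • π ^ (i : ℕ)) ≠ wL (g j • π ^ (j : ℕ)) := by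
    intro g i j hgi hgj hij
    obtain ⟨vi, hvi⟩ := exists_oa ((wK.ne_zero_iff).2 hgi)
    obtain ⟨vj, hvj⟩ := exists_oa ((wK.ne_zero_iff).2 hgj)
    rw [val_term p K L wK wL hext hπ hvi, val_term p K L wK wL hext hπ hvj]
    intro h
    have h2 : (p : ℤ) * vi - i = (p : ℤ) * vj - j := oa_inj h
    have h3 : (p : ℤ) ∣ ((i : ℤ) - (j : ℤ)) := ⟨vi - vj, by linarith⟩
    have h4 : ((i : ℤ) - (j : ℤ)) = 0 := by
      refine Int.eq_zero_of_abs_lt_dvd h3 ?_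
      have hi := i.2
      have hj := j.2
      rw [abs_lt]
      constructor <;> [push_cast; push_cast] <;> omega
    exact hij (Fin.ext (by omega))
  -- the terms with nonzero coefficient
  have hmaxval : ∀ (g : Fin p → K), (∃ i, g i ≠ 0) →
      ∃ i₀, g i₀ ≠ 0 ∧ wL (g i₀ • π ^ (i₀ : ℕ)) ≠ 0 ∧
        wL (∑ i, g i • π ^ (i : ℕ)) = wL (g i₀ • π ^ (i₀ : ℕ)) ∧
        ∀ j, wL (g j • π ^ (j : ℕ)) ≤ wL (g i₀ • π ^ (i₀ : ℕ)) := by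
    intro g hg
    set s : Finset (Fin p) := Finset.univ.filter (fun i => g i ≠ 0) with hs
    have hsne : s.Nonempty := by
      obtain ⟨i, hi⟩ := hg
      exact ⟨i, by simp [hs, hi]⟩
    obtain ⟨i₀, hi₀s, hi₀max⟩ := s.exists_max_image (fun i => wL (g i • π ^ (i : ℕ))) hsne
    have hgi₀ : g i₀ ≠ 0 := (Finset.mem_filter.1 hi₀s).2
    have hne : wL (g i₀ • π ^ ((i₀ : Fin p) : ℕ)) ≠ 0 := by
      rw [Valuation.ne_zero_iff]
      exact smul_ne_zero hgi₀ (pow_ne_zero _ (by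
        intro h; rw [h, map_zero] at hπ; exact (oa_ne_zero _) hπ.symm))
    have hsum : ∑ i, g i • π ^ (i : ℕ) = ∑ i ∈ s, g i • π ^ (i : ℕ) := by
      refine (Finset.sum_subset (Finset.subset_univ s) ?_).symm
      intro i _ hi
      have : g i = 0 := by
        by_contra hgi
        exact hi (by simp [hs, hgi])
      rw [this, zero_smul]
    refine ⟨i₀, hgi₀, hne, ?_, ?_⟩
    · rw [hsum]
      refine val_sum_eq_of_max wL s _ i₀ hi₀s hne ?_
      intro j hj hjne
      have hgj : g j ≠ 0 := (Finset.mem_filter.1 hj).2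
      exact lt_of_le_of_ne (hi₀max j hj) (hdist g j i₀ hgj hgi₀ hjne)
    · intro j
      by_cases hgj : g j = 0
      · rw [hgj, zero_smul, map_zero]
        exact zero_le'
      · exact hi₀max j (by simp [hs, hgj])
  -- linear independence of 1, π, ..., π^(p-1)
  have hli : LinearIndependent K (fun i : Fin p => π ^ (i : ℕ)) := by
    rw [Fintype.linearIndependent_iff]
    intro g hg
    by_contra hc
    push_neg at hc
    obtain ⟨i₀, -, hne, heq, -⟩ := hmaxval g hc
    rw [hg, map_zero] at heq
    exact hne heq.symm
  set hbasis : Module.Basis (Fin p) K L := basisOfLinearIndependentOfCardEqFinrank hli (by simp [hdeg])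
    with hbdef
  have hbasis_eq : ⇑hbasis = fun i : Fin p => π ^ (i : ℕ) := by
    rw [hbdef]
    exact coe_basisOfLinearIndependentOfCardEqFinrank _ _
  intro x hx
  rcases eq_or_ne x 0 with rfl | hx0
  · exact ⟨0, by simp, by simpa using oa_le_one.2 (by norm_num)⟩
  set g : Fin p → K := fun i => hbasis.repr x i with hgdef
  have hrepr : x = ∑ i, g i • π ^ (i : ℕ) := by
    conv_lhs => rw [← hbasis.sum_repr x]
    simp [hbasis_eq, hgdef]
  have hgex : ∃ i, g i ≠ 0 := by
    by_contra hcon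
    push_neg at hcon
    apply hx0
    rw [hrepr]
    simp [hcon]
  obtain ⟨i₀, hgi₀, hne, heq, hmax⟩ := hmaxval g hgex
  rw [← hrepr] at heq
  -- all terms have valuation ≤ 1
  have hterm_le : ∀ j, wL (g j • π ^ (j : ℕ)) ≤ 1 := by
    intro j
    exact le_trans (hmax j) (by rw [← heq]; exact hx)
  -- coefficients are integral, and terms with j ≥ 1 have valuation ≤ oa (-1)
  have hcoeff : ∀ j : Fin p, wK (g j) ≤ 1 ∧ ((j : ℕ) ≠ 0 → wL (g j • π ^ (j : ℕ)) ≤ oa (-1)) := by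
    intro j
    by_cases hgj : g j = 0
    · rw [hgj]
      simp only [map_zero, zero_smul]
      exact ⟨zero_le', fun _ => zero_le'⟩
    · obtain ⟨vj, hvj⟩ := exists_oa ((wK.ne_zero_iff).2 hgj)
      have hterm := hterm_le j
      rw [val_term p K L wK wL hext hπ hvj, oa_le_one] at hterm
      have hjp : (j : ℕ) < p := j.2
      have hvj0 : vj ≤ 0 := by
        by_contra hcon
        push_neg at hcon
        have : (p : ℤ) * vj ≥ p := by nlinarith [hp.two_le]
        omega
      constructor
      · rw [hvj, oa_le_one]; exact hvj0
      · intro hj0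
        rw [val_term p K L wK wL hext hπ hvj, oa_le_oa]
        have : (p : ℤ) * vj ≤ 0 := by
          have := hp.two_le
          nlinarith
        omega
  refine ⟨g ⟨0, hp.pos⟩, (hcoeff ⟨0, hp.pos⟩).1, ?_⟩
  have h0 : algebraMap K L (g ⟨0, hp.pos⟩) = g ⟨0, hp.pos⟩ • π ^ ((⟨0, hp.pos⟩ : Fin p) : ℕ) := by
    simp [Algebra.smul_def]
  rw [h0]
  have hxsplit : x - g ⟨0, hp.pos⟩ • π ^ ((⟨0, hp.pos⟩ : Fin p) : ℕ)
      = ∑ j ∈ Finset.univ.erase ⟨0, hp.pos⟩, g j • π ^ (j : ℕ) := by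
    rw [hrepr, ← Finset.add_sum_erase Finset.univ _ (Finset.mem_univ ⟨0, hp.pos⟩)]
    ring
  rw [hxsplit]
  refine Valuation.map_sum_le _ ?_
  intro j hj
  refine (hcoeff j).2 ?_
  intro hj0
  exact (Finset.ne_of_mem_erase hj) (Fin.ext hj0)

end Approx

section TraceEst

variable (p : ℕ) (K L : Type) [Field K] [Field L] [Algebra K L]
    [FiniteDimensional K L] [IsGalois K L]
    (wK : Valuation K Zm0) (wL : Valuation L Zm0)

/-- weak trace estimate: the trace of an integral element lies in the maximal ideal. -/
lemma trace_int (hp : p.Prime) (hdeg : Module.finrank K L = p)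
    (hwL : Function.Surjective wL)
    (hext : ∀ x : K, wL (algebraMap K L x) = wK x ^ p)
    (hσ : ∀ (τ : L ≃ₐ[K] L) (y : L), wL (τ y) = wL y)
    (eK : ℤ) (heKpos : 0 < eK) (heK : wK (p : K) = oa (-eK)) :
    ∀ x : L, wL x ≤ 1 → wK (Algebra.trace K L x) ≤ oa (-1) := by
  intro x hx
  obtain ⟨c, hc1, hc2⟩ := approx_const p K L wK wL hp hdeg hwL hext x hx
  have hsplit : Algebra.trace K L x
      = Algebra.trace K L (algebraMap K L c) + Algebra.trace K L (x - algebraMap K L c) := by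
    rw [← map_add]
    congr 1
    ring
  rw [hsplit]
  have h1 : wK (Algebra.trace K L (algebraMap K L c)) ≤ oa (-1) := by
    rw [Algebra.trace_algebraMap, hdeg, nsmul_eq_mul, map_mul]
    calc wK ((p : K)) * wK c ≤ oa (-eK) * 1 := by
          rw [heK]; exact mul_le_mul_right hc1 _
      _ = oa (-eK) := mul_one _
      _ ≤ oa (-1) := oa_le_oa.2 (by omega)
  have h2 : wK (Algebra.trace K L (x - algebraMap K L c)) ≤ oa (-1) := by
    set y := x - algebraMap K L c with hy
    have hpow : wK (Algebra.trace K L y) ^ p = wL (algebraMap K L (Algebra.trace K L y)) :=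
      (hext _).symm
    have hyle : wL (algebraMap K L (Algebra.trace K L y)) ≤ oa (-1) := by
      rw [trace_eq_sum_automorphisms]
      refine Valuation.map_sum_le _ ?_
      intro τ _
      rw [hσ τ y]
      exact hc2
    have hle : wK (Algebra.trace K L y) ^ p ≤ oa (-1) := by rw [hpow]; exact hyle
    rcases eq_or_ne (wK (Algebra.trace K L y)) 0 with h0 | h0
    · rw [h0]; exact zero_le'
    · obtain ⟨t, ht⟩ := exists_oa h0
      rw [ht, oa_pow, oa_le_oa] at hle
      rw [ht, oa_le_oa]
      by_contra hcon
      push_neg at hcon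
      have hppos : 0 ≤ (p : ℤ) * t := mul_nonneg (by positivity) (by omega)
      omega
  exact le_trans (wK.map_add _ _) (max_le h1 h2)

end TraceEst

section TraceEst2

variable (p : ℕ) (K L : Type) [Field K] [Field L] [Algebra K L]
    [FiniteDimensional K L] [IsGalois K L]
    (wK : Valuation K Zm0) (wL : Valuation L Zm0)

/-- scaled trace estimate. -/
lemma trace_scaled (hp : p.Prime) (hdeg : Module.finrank K L = p)
    (hwK : Function.Surjective wK) (hwL : Function.Surjective wL)
    (hext : ∀ x : K, wL (algebraMap K L x) = wK x ^ p)
    (hσ : ∀ (τ : L ≃ₐ[K] L) (y : L), wL (τ y) = wL y)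
    (eK : ℤ) (heKpos : 0 < eK) (heK : wK (p : K) = oa (-eK)) :
    ∀ (m : ℕ) (x : L), wL x ≤ oa (-(p * m : ℕ)) →
      wK (Algebra.trace K L x) ≤ oa (-(m + 1 : ℕ)) := by
  obtain ⟨πK, hπK⟩ := hwK (oa (-1))
  have hπK0 : πK ≠ 0 := by
    intro h; rw [h, map_zero] at hπK; exact (oa_ne_zero _) hπK.symm
  intro m x hx
  set x' : L := (algebraMap K L (πK ^ m))⁻¹ * x with hx'def
  have hmapval : wL (algebraMap K L (πK ^ m)) = oa (-(p * m : ℕ)) := by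
    rw [hext, map_pow, hπK, oa_pow, oa_pow]
    congr 1
    push_cast
    ring
  have hmap0 : algebraMap K L (πK ^ m) ≠ 0 := by
    intro h
    rw [h, map_zero] at hmapval
    exact (oa_ne_zero _) hmapval.symm
  have hx'le : wL x' ≤ 1 := by
    rw [hx'def, map_mul, map_inv₀, hmapval]
    calc (oa (-(p * m : ℕ)))⁻¹ * wL x ≤ (oa (-(p * m : ℕ)))⁻¹ * oa (-(p * m : ℕ)) :=
          mul_le_mul_right hx _
      _ = 1 := inv_mul_cancel₀ (oa_ne_zero _)
  have hxeq : x = (πK ^ m) • x' := by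
    rw [hx'def, Algebra.smul_def, ← mul_assoc, mul_inv_cancel₀ hmap0, one_mul]
  rw [hxeq, map_smul, smul_eq_mul, map_mul, map_pow, hπK, oa_pow]
  calc oa ((m : ℤ) * (-1)) * wK (Algebra.trace K L x') ≤ oa ((m : ℤ) * (-1)) * oa (-1) :=
        mul_le_mul_right (trace_int p K L wK wL hp hdeg hwL hext hσ eK heKpos heK x' hx'le) _
    _ = oa (-(m + 1 : ℕ)) := by rw [oa_mul]; congr 1; push_cast; ring

/-- valuation of the norm. -/
lemma norm_val (hp : p.Prime) (hdeg : Module.finrank K L = p)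
    (hext : ∀ x : K, wL (algebraMap K L x) = wK x ^ p)
    (hσ : ∀ (τ : L ≃ₐ[K] L) (y : L), wL (τ y) = wL y) (x : L) :
    wK (Algebra.norm K x) = wL x := by
  have hcard : Fintype.card (L ≃ₐ[K] L) = p := by
    rw [← Nat.card_eq_fintype_card, IsGalois.card_aut_eq_finrank]; exact hdeg
  refine zm0_pow_inj hp.ne_zero ?_
  rw [← hext, Algebra.norm_eq_prod_automorphisms, map_prod]
  have : ∀ τ : L ≃ₐ[K] L, wL (τ x) = wL x := fun τ => hσ τ x
  rw [Finset.prod_congr rfl (fun τ _ => this τ), Finset.prod_const, Finset.card_univ, hcard]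

end TraceEst2

/-- integers prime to `p` are valuation units. -/
lemma val_coprime_unit (p : ℕ) (hp : p.Prime) (K : Type) [Field K]
    (wK : Valuation K Zm0) (eK : ℤ) (heKpos : 0 < eK) (heK : wK (p : K) = oa (-eK))
    (n : ℕ) (hn : ¬ p ∣ n) : wK (n : K) = 1 := by
  have hcop : Nat.Coprime p n := (Nat.Prime.coprime_iff_not_dvd hp).2 hn
  have hcop' : IsCoprime (n : ℤ) (p : ℤ) := by
    rw [Int.isCoprime_iff_gcd_eq_one]
    simpa [Int.gcd, Nat.coprime_comm] using hcop.symm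
  obtain ⟨u, v, huv⟩ := hcop'
  have hKid : (u : K) * (n : K) + (v : K) * (p : K) = 1 := by
    have := congrArg (fun t : ℤ => (t : K)) huv
    push_cast at this
    simpa using this
  have hvp : wK ((v : K) * (p : K)) < 1 := by
    rw [map_mul]
    calc wK ((v : K)) * wK ((p : K)) ≤ 1 * wK ((p : K)) :=
          mul_le_mul_left (val_intCast_le_one wK v) _
      _ = wK ((p : K)) := one_mul _
      _ < 1 := by rw [heK, ← oa_zero]; exact oa_lt_oa.2 (by omega)
  have hun : 1 ≤ wK ((u : K) * (n : K)) := by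
    by_contra hcon
    push_neg at hcon
    have : wK ((u : K) * (n : K) + (v : K) * (p : K)) < 1 :=
      lt_of_le_of_lt (wK.map_add _ _) (max_lt hcon hvp)
    rw [hKid, wK.map_one] at this
    exact lt_irrefl _ this
  have h1 : wK ((u : K) * (n : K)) ≤ wK ((n : K)) := by
    rw [map_mul]
    calc wK ((u : K)) * wK ((n : K)) ≤ 1 * wK ((n : K)) :=
          mul_le_mul_left (val_intCast_le_one wK u) _
      _ = wK ((n : K)) := one_mul _
  exact le_antisymm (val_natCast_le_one wK n) (le_trans hun h1)

/-- `p` divides the multinomial coefficient of any non-concentrated partition of `p`. -/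
lemma p_dvd_multinomial (p : ℕ) (hp : p.Prime) {G : Type*} [Fintype G] [DecidableEq G]
    (k : G → ℕ) (hsum : ∑ σ : G, k σ = p) (hns : ∀ σ, k σ ≠ p) :
    p ∣ Nat.multinomial Finset.univ k := by
  have hlt : ∀ σ, k σ < p := by
    intro σ
    refine lt_of_le_of_ne ?_ (hns σ)
    rw [← hsum]
    exact Finset.single_le_sum (fun _ _ => Nat.zero_le _) (Finset.mem_univ σ)
  have hspec := Nat.multinomial_spec Finset.univ k
  rw [hsum] at hspec
  have hpdvd : p ∣ Nat.factorial p := Nat.dvd_factorial hp.pos le_rfl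
  rw [← hspec] at hpdvd
  rcases (Nat.Prime.dvd_mul hp).1 hpdvd with h | h
  · exfalso
    obtain ⟨σ, -, hσ⟩ := (Nat.Prime.prime hp).exists_mem_finset_dvd h
    rw [Nat.Prime.dvd_factorial hp] at hσ
    exact absurd hσ (not_le.2 (hlt σ))
  · exact h


set_option maxHeartbeats 1000000 in
/-- Hesselholt, Lemma 2.2. Let `L/K` be a totally ramified cyclic extension
of degree `p` of complete discrete valuation fields of characteristic `0` and residue
characteristic `p`, with `e_K = v_K(p)`. Then for all `a ∈ O_L`,
`v_K(tr_{L/K}(a^p) − tr_{L/K}(a)^p) = e_K + v_L(a)`. In multiplicative notation this reads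
`wK(tr(a^p) − (tr a)^p) = oa (-e_K) · wL a`. -/
theorem stmt9 (p : ℕ) (hp : p.Prime) (K L : Type) [Field K] [Field L] [Algebra K L]
    [CharZero K] [IsGalois K L] [FiniteDimensional K L] [IsCyclic (L ≃ₐ[K] L)]
    (hdeg : Module.finrank K L = p)
    (wK : Valuation K Zm0) (wL : Valuation L Zm0)
    (hwK : Function.Surjective wK) (hwL : Function.Surjective wL)
    (hKcomplete : @CompleteSpace K (Valued.mk' wK).toUniformSpace)
    (hLcomplete : @CompleteSpace L (Valued.mk' wL).toUniformSpace)
    (hext : ∀ x : K, wL (algebraMap K L x) = wK x ^ p)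
    -- residue characteristic `p`, with absolute ramification index `e_K = v_K(p) ≥ 1`
    (eK : ℤ) (heKpos : 0 < eK) (heK : wK (p : K) = oa (-eK)) :
    ∀ a : L, wL a ≤ 1 →
      wK (Algebra.trace K L (a ^ p) - Algebra.trace K L a ^ p) = oa (-eK) * wL a := by
  classical
  intro a ha
  rcases eq_or_ne a 0 with rfl | ha0
  · simp [zero_pow hp.ne_zero]
  have hσ := sigma_invariance p hp.ne_zero K L wK wL hwK hwL hKcomplete hext
  obtain ⟨va, hva⟩ := exists_oa (wL.ne_zero_iff.2 ha0)
  have hva0 : va ≤ 0 := oa_le_one.1 (hva ▸ ha)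
  set m : ℕ := (-va).toNat with hm
  have hmva : (m : ℤ) = -va := Int.toNat_of_nonneg (by omega)
  have hcard : Fintype.card (L ≃ₐ[K] L) = p := by
    rw [← Nat.card_eq_fintype_card, IsGalois.card_aut_eq_finrank]; exact hdeg
  -- the multinomial expansion data
  set A : Finset ((L ≃ₐ[K] L) → ℕ) := Finset.piAntidiag Finset.univ p with hA
  set bb : ((L ≃ₐ[K] L) → ℕ) → L := fun k => ∏ σ : L ≃ₐ[K] L, (σ a) ^ (k σ) with hbb
  set f : ((L ≃ₐ[K] L) → ℕ) → L :=
    fun k => (Nat.multinomial Finset.univ k : L) * bb k with hf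
  have hexp : (∑ σ : L ≃ₐ[K] L, σ a) ^ p = ∑ k ∈ A, f k :=
    Finset.sum_pow_eq_sum_piAntidiag _ _ p
  have hmemA : ∀ k ∈ A, ∑ σ : L ≃ₐ[K] L, k σ = p := by
    intro k hk
    exact (Finset.mem_piAntidiag.1 hk).1
  set one1 : (L ≃ₐ[K] L) → ℕ := fun _ => 1 with hone1
  set single : (L ≃ₐ[K] L) → ((L ≃ₐ[K] L) → ℕ) :=
    fun σ σ' => if σ' = σ then p else 0 with hsingle
  have hsum_single : ∀ σ, ∑ σ', single σ σ' = p := by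
    intro σ
    simp [hsingle]
  have hsingle_inj : Function.Injective single := by
    intro σ σ' h
    by_contra hne
    have h2 : p = if σ = σ' then p else 0 := by
      have h3 := congrFun h σ
      simpa [hsingle] using h3
    rw [if_neg hne] at h2
    exact hp.ne_zero h2
  set D : Finset ((L ≃ₐ[K] L) → ℕ) := Finset.image single Finset.univ with hD
  have honeA : one1 ∈ A := by
    rw [hA, Finset.mem_piAntidiag]
    refine ⟨by simp [hone1, hcard], by intro i _; exact Finset.mem_univ i⟩
  have hone_notD : one1 ∉ D := by
    rw [hD, Finset.mem_image]
    rintro ⟨σ, -, hσ'⟩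
    have := congrFun hσ' σ
    simp only [hsingle, hone1, if_pos rfl] at this
    exact hp.one_lt.ne this.symm
  have hD_subA : D ⊆ A := by
    intro k hk
    rw [hD, Finset.mem_image] at hk
    obtain ⟨σ, -, rfl⟩ := hk
    rw [hA, Finset.mem_piAntidiag]
    exact ⟨hsum_single σ, by intro i _; exact Finset.mem_univ i⟩
  have hD_subA' : D ⊆ A.erase one1 := by
    intro k hk
    refine Finset.mem_erase.2 ⟨?_, hD_subA hk⟩
    intro hkeq
    exact hone_notD (hkeq ▸ hk)
  set R : Finset ((L ≃ₐ[K] L) → ℕ) := (A.erase one1) \ D with hR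
  have hsplitA : ∑ k ∈ A, f k = f one1 + (∑ k ∈ R, f k + ∑ k ∈ D, f k) := by
    rw [← Finset.add_sum_erase A f honeA]
    congr 1
    rw [hR, Finset.sum_sdiff hD_subA']
  -- values of the special terms
  have hmult_one : Nat.multinomial Finset.univ one1 = Nat.factorial p := by
    have hspec := Nat.multinomial_spec Finset.univ one1
    have h1 : ∏ i : L ≃ₐ[K] L, (one1 i).factorial = 1 := by simp [hone1]
    have h2 : ∑ i : L ≃ₐ[K] L, one1 i = p := by simp [hone1, hcard]
    rw [h1, h2, one_mul] at hspec
    exact hspec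
  have hfone : f one1 = (Nat.factorial p : L) * algebraMap K L (Algebra.norm K a) := by
    rw [hf]
    simp only [hmult_one]
    congr 1
    rw [Algebra.norm_eq_prod_automorphisms]
    simp [hbb, hone1]
  have hmult_single : ∀ σ, Nat.multinomial Finset.univ (single σ) = 1 := by
    intro σ
    have hspec := Nat.multinomial_spec Finset.univ (single σ)
    have h1 : ∏ i, (single σ i).factorial = Nat.factorial p := by
      have heach : ∀ i, (single σ i).factorial = if i = σ then Nat.factorial p else 1 := by
        intro i
        simp only [hsingle]
        by_cases hi : i = σ <;> simp [hi]
      rw [Finset.prod_congr rfl (fun i _ => heach i),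
        Finset.prod_ite_eq' Finset.univ σ (fun _ => Nat.factorial p)]
      simp
    have h2 : ∑ i, single σ i = p := hsum_single σ
    rw [h1, h2] at hspec
    exact Nat.eq_of_mul_eq_mul_left (Nat.factorial_pos p) (by rw [hspec, mul_one])
  have hbb_single : ∀ σ, bb (single σ) = (σ a) ^ p := by
    intro σ
    rw [hbb, hsingle]
    simp only []
    rw [show (∏ σ' : L ≃ₐ[K] L, (σ' a) ^ (if σ' = σ then p else 0))
        = ∏ σ' : L ≃ₐ[K] L, (if σ' = σ then (σ' a) ^ p else 1) from
      Finset.prod_congr rfl (fun σ' _ => by split <;> simp)]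
    simp
  have hfD : ∑ k ∈ D, f k = algebraMap K L (Algebra.trace K L (a ^ p)) := by
    rw [hD, Finset.sum_image (fun x _ y _ h => hsingle_inj h)]
    rw [trace_eq_sum_automorphisms]
    refine Finset.sum_congr rfl ?_
    intro σ _
    rw [hf]
    simp only [hmult_single, hbb_single, Nat.cast_one, one_mul, map_pow]
  -- the translation action on exponent vectors
  set act : (L ≃ₐ[K] L) → ((L ≃ₐ[K] L) → ℕ) → ((L ≃ₐ[K] L) → ℕ) :=
    fun τ k σ => k (τ⁻¹ * σ) with hact
  have hone_act : ∀ k, act 1 k = k := by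
    intro k; funext σ; simp [hact]
  have hmul_act : ∀ τ σ k, act (τ * σ) k = act τ (act σ k) := by
    intro τ σ k; funext σ'; simp [hact, mul_assoc]
  have hsum_act : ∀ τ k, ∑ σ : L ≃ₐ[K] L, act τ k σ = ∑ σ : L ≃ₐ[K] L, k σ := by
    intro τ k
    exact Fintype.sum_equiv (Equiv.mulLeft τ⁻¹) _ _ (fun σ => rfl)
  have hmult_act : ∀ τ k,
      Nat.multinomial Finset.univ (act τ k) = Nat.multinomial Finset.univ k := by
    intro τ k
    have h1 : ∑ σ : L ≃ₐ[K] L, act τ k σ = ∑ σ : L ≃ₐ[K] L, k σ := hsum_act τ k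
    have h2 : ∏ σ : L ≃ₐ[K] L, (act τ k σ).factorial
        = ∏ σ : L ≃ₐ[K] L, (k σ).factorial :=
      Fintype.prod_equiv (Equiv.mulLeft τ⁻¹) _ _ (fun σ => rfl)
    have s1 := Nat.multinomial_spec Finset.univ (act τ k)
    have s2 := Nat.multinomial_spec Finset.univ k
    rw [h1, h2] at s1
    exact Nat.eq_of_mul_eq_mul_left
      (Finset.prod_pos (fun i _ => Nat.factorial_pos _)) (s1.trans s2.symm)
  have hbb_act : ∀ τ k, bb (act τ k) = τ (bb k) := by
    intro τ k
    have h1 : τ (bb k) = ∏ σ : L ≃ₐ[K] L, ((τ * σ) a) ^ (k σ) := by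
      rw [hbb]
      simp only [map_prod, map_pow]
      rfl
    have h2 : bb (act τ k) = ∏ σ : L ≃ₐ[K] L, ((τ * σ) a) ^ (k σ) := by
      rw [hbb]
      refine (Fintype.prod_equiv (Equiv.mulLeft τ) _ _ ?_).symm
      intro σ
      simp only [hact, Equiv.coe_mulLeft]
      rw [inv_mul_cancel_left]
    rw [h1, h2]
  have hA_act : ∀ τ k, k ∈ A → act τ k ∈ A := by
    intro τ k hk
    rw [hA, Finset.mem_piAntidiag] at hk ⊢
    exact ⟨by rw [hsum_act]; exact hk.1, by intro i _; exact Finset.mem_univ i⟩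
  have hsingle_act : ∀ τ σ, act τ (single σ) = single (τ * σ) := by
    intro τ σ
    funext σ'
    simp only [hact, hsingle]
    congr 1
    simp only [eq_iff_iff]
    constructor
    · intro h; rw [← h]; group
    · intro h; rw [h]; group
  have hR_act : ∀ τ k, k ∈ R → act τ k ∈ R := by
    intro τ k hk
    rw [hR, Finset.mem_sdiff, Finset.mem_erase] at hk ⊢
    obtain ⟨⟨hkone, hkA⟩, hkD⟩ := hk
    refine ⟨⟨?_, hA_act τ k hkA⟩, ?_⟩
    · intro hc
      apply hkone
      have := congrArg (act τ⁻¹) hc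
      rw [← hmul_act, inv_mul_cancel, hone_act] at this
      rw [this]
    · intro hc
      apply hkD
      rw [hD, Finset.mem_image] at hc ⊢
      obtain ⟨σ, -, hσ'⟩ := hc
      refine ⟨τ⁻¹ * σ, Finset.mem_univ _, ?_⟩
      rw [← hsingle_act, hσ', ← hmul_act, inv_mul_cancel, hone_act]
  have hfree : ∀ k ∈ R, ∀ τ, act τ k = k → τ = 1 := by
    intro k hk τ hτk
    by_contra hτ1
    -- τ generates the cyclic group of prime order p
    have horder : orderOf τ = p := by
      have hdvd : orderOf τ ∣ p := hcard ▸ orderOf_dvd_card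
      rcases (Nat.Prime.eq_one_or_self_of_dvd hp _ hdvd) with h | h
      · exact absurd (orderOf_eq_one_iff.1 h) hτ1
      · exact h
    have htop : ∀ g : L ≃ₐ[K] L, g ∈ Subgroup.zpowers τ := by
      have hcardz : Nat.card (Subgroup.zpowers τ) = Nat.card (L ≃ₐ[K] L) := by
        rw [Nat.card_zpowers, horder, Nat.card_eq_fintype_card, hcard]
      have := Subgroup.eq_top_of_card_eq (Subgroup.zpowers τ) hcardz
      intro g
      rw [this]
      exact Subgroup.mem_top g
    -- the stabilizer subgroup
    set H : Subgroup (L ≃ₐ[K] L) :=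
      { carrier := {g | act g k = k}
        one_mem' := hone_act k
        mul_mem' := by
          intro g h hg hh
          simp only [Set.mem_setOf_eq] at hg hh ⊢
          rw [hmul_act, hh, hg]
        inv_mem' := by
          intro g hg
          simp only [Set.mem_setOf_eq] at hg ⊢
          conv_lhs => rw [← hg]
          rw [← hmul_act, inv_mul_cancel, hone_act] } with hH
    have hτH : τ ∈ H := hτk
    have hallH : ∀ g : L ≃ₐ[K] L, g ∈ H := by
      intro g
      have := Subgroup.zpowers_le.2 hτH
      exact this (htop g)
    -- k is constant
    have hconst : ∀ σ : L ≃ₐ[K] L, k σ = k 1 := by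
      intro σ
      have := congrFun (hallH σ⁻¹ : act σ⁻¹ k = k) 1
      simp only [hact, inv_inv, mul_one] at this
      omega
    have hsumk : ∑ σ : L ≃ₐ[K] L, k σ = p :=
      hmemA k (Finset.mem_sdiff.1 (hR ▸ hk) |>.1 |> Finset.mem_of_mem_erase)
    rw [Finset.sum_congr rfl (fun σ _ => hconst σ), Finset.sum_const, Finset.card_univ,
      hcard, smul_eq_mul] at hsumk
    have hk1 : k 1 = 1 :=
      Nat.eq_of_mul_eq_mul_left hp.pos (hsumk.trans (mul_one p).symm)
    have : k = one1 := by
      funext σ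
      rw [hconst σ, hk1]
    exact (Finset.mem_erase.1 (Finset.mem_sdiff.1 (hR ▸ hk) |>.1)).1 this
  -- transversal decomposition of the rest sum
  obtain ⟨T, hTR, hTsum⟩ := free_action_sum act hone_act hmul_act R hR_act hfree f
  set cT : K := ∑ t ∈ T, (Nat.multinomial Finset.univ t : K) * Algebra.trace K L (bb t)
    with hcT
  have hRsum : ∑ k ∈ R, f k = algebraMap K L cT := by
    rw [hTsum, hcT, map_sum]
    refine Finset.sum_congr rfl ?_
    intro t _
    rw [map_mul, map_natCast]
    have hstep : ∑ τ : L ≃ₐ[K] L, f (act τ t)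
        = ∑ τ : L ≃ₐ[K] L, (Nat.multinomial Finset.univ t : L) * τ (bb t) :=
      Finset.sum_congr rfl (fun τ _ => by simp only [hf, hmult_act, hbb_act])
    rw [hstep, ← Finset.mul_sum, trace_eq_sum_automorphisms]
  -- the identity in K
  have hid : (Algebra.trace K L a) ^ p
      = Algebra.trace K L (a ^ p) + (Nat.factorial p : K) * (Algebra.norm K a) + cT := by
    apply RingHom.injective (algebraMap K L)
    rw [map_add, map_add, map_mul, map_pow, map_natCast, trace_eq_sum_automorphisms a,
      hexp, hsplitA, hfone, hfD, hRsum]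
    ring
  -- valuations of the main term
  have hwnorm : wK (Algebra.norm K a) = oa va := by
    rw [norm_val p K L wK wL hp hdeg hext hσ, hva]
  have hfactval : wK ((Nat.factorial p : K)) = oa (-eK) := by
    have hfac : (Nat.factorial p : K) = (p : K) * ((Nat.factorial (p-1)) : K) := by
      rw [← Nat.cast_mul, Nat.mul_factorial_pred hp.ne_zero]
    have hnd : ¬ p ∣ Nat.factorial (p - 1) := by
      intro h
      have := (Nat.Prime.dvd_factorial hp).1 h
      have := hp.two_le
      omega
    rw [hfac, map_mul, heK, val_coprime_unit p hp K wK eK heKpos heK _ hnd, mul_one]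
  have hmainval : wK ((Nat.factorial p : K) * Algebra.norm K a) = oa (-eK + va) := by
    rw [map_mul, hfactval, hwnorm, oa_mul]
  -- bound the rest
  have hbbval : ∀ t ∈ T, wL (bb t) ≤ oa (-(p * m : ℕ)) := by
    intro t ht
    have htA : t ∈ A :=
      Finset.mem_of_mem_erase ((Finset.mem_sdiff.1 (hR ▸ hTR ht)).1)
    have hsumt := hmemA t htA
    have h1 : ∀ σ : L ≃ₐ[K] L, wL ((σ a) ^ t σ) = oa va ^ t σ := fun σ => by
      rw [map_pow, hσ σ a, hva]
    have hstep : wL (bb t) = oa va ^ p := by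
      rw [hbb]
      rw [map_prod wL, Finset.prod_congr rfl (fun σ _ => h1 σ),
        Finset.prod_pow_eq_pow_sum, hsumt]
    rw [hstep, oa_pow]
    apply le_of_eq
    congr 1
    push_cast
    rw [hmva]
    ring
  have hns : ∀ t ∈ T, ∀ σ, t σ ≠ p := by
    intro t ht σ₀ hc
    have htR := hR ▸ hTR ht
    have htD := (Finset.mem_sdiff.1 htR).2
    apply htD
    have htA : t ∈ A := Finset.mem_of_mem_erase ((Finset.mem_sdiff.1 htR).1)
    have hsumt := hmemA t htA
    rw [hD, Finset.mem_image]
    refine ⟨σ₀, Finset.mem_univ _, ?_⟩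
    funext σ'
    by_cases hσ' : σ' = σ₀
    · rw [hsingle]
      simp only [hσ', if_pos rfl]
      exact hc.symm ▸ rfl
    · have hsub : ({σ₀, σ'} : Finset (L ≃ₐ[K] L)) ⊆ Finset.univ := Finset.subset_univ _
      have hle := Finset.sum_le_sum_of_subset (f := t) hsub
      rw [Finset.sum_pair (fun h => hσ' h.symm), hsumt, hc] at hle
      have ht0 : t σ' = 0 := by omega
      rw [hsingle]
      simp only [if_neg hσ']
      exact ht0 ▸ rfl
  have hterm : ∀ t ∈ T,
      wK ((Nat.multinomial Finset.univ t : K) * Algebra.trace K L (bb t))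
        ≤ oa (-eK + va - 1) := by
    intro t ht
    have htA : t ∈ A :=
      Finset.mem_of_mem_erase ((Finset.mem_sdiff.1 (hR ▸ hTR ht)).1)
    obtain ⟨m', hm'⟩ := p_dvd_multinomial p hp t (hmemA t htA) (hns t ht)
    have htr : wK (Algebra.trace K L (bb t)) ≤ oa (-(m + 1 : ℕ)) :=
      trace_scaled p K L wK wL hp hdeg hwK hwL hext hσ eK heKpos heK m (bb t)
        (hbbval t ht)
    have hcast : ((Nat.multinomial Finset.univ t : ℕ) : K) = (p : K) * (m' : K) := by
      rw [hm']
      push_cast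
      ring
    rw [map_mul, hcast, map_mul, heK]
    calc oa (-eK) * wK ((m' : K)) * wK (Algebra.trace K L (bb t))
        ≤ oa (-eK) * 1 * oa (-(m + 1 : ℕ)) := by
          exact mul_le_mul' (mul_le_mul_right (val_natCast_le_one wK m') _) htr
      _ = oa (-eK + va - 1) := by
          rw [mul_one, oa_mul]
          congr 1
          push_cast
          omega
  have hcTval : wK cT ≤ oa (-eK + va - 1) := by
    rw [hcT]
    exact Valuation.map_sum_le wK hterm
  -- conclusion
  have hdiff : Algebra.trace K L (a ^ p) - Algebra.trace K L a ^ p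
      = -((Nat.factorial p : K) * Algebra.norm K a) + -cT := by
    rw [hid]
    ring
  have hlt : wK (-cT) < wK (-((Nat.factorial p : K) * Algebra.norm K a)) := by
    rw [Valuation.map_neg, Valuation.map_neg, hmainval]
    exact lt_of_le_of_lt hcTval (oa_lt_oa.2 (by omega))
  rw [hdiff, Valuation.map_add_eq_of_lt_left wK hlt, Valuation.map_neg, hmainval, hva, oa_mul]
end
end

section
/- Let L/K be a totally ramified cyclic Galois extension of degree p with group G = ⟨σ⟩, and let (x_1,…,x_n) ∈ W_n(O_L) be a Witt vector with tr(x) = Σ_{i=0}^{p−1} σ^i·x = 0 in W_n(O_L). Then for each 2 ≤ ℓ ≤ n, −tr(x_ℓ) = (tr(x_{ℓ−1}^p) − tr(x_{ℓ−1})^p)/p − C·tr(x_{ℓ−1})^p + h_{ℓ−2}, where C = (1/p)Σ_{j=1}^{p−1}(−1)^j C(p,j) ∈ ℤ, tr denotes the field trace on coordinates, and h_{ℓ−2} ∈ O_K is an explicit polynomial expression in x_1,…,x_{ℓ−2} and their Galois conjugates, all of whose monomials have degree ≥ p². -/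
noncomputable section

variable {K L : Type} [Field K] [Field L] [Algebra K L]
variable (wL : Valuation L Zm0)

/-- A valuation-preserving `K`-automorphism of `L` restricts to a ring endomorphism of the
valuation ring `O_L`. -/
def galHom (hGal : ∀ (σ : L ≃ₐ[K] L) (a : L), wL (σ a) = wL a) (σ : L ≃ₐ[K] L) :
    wL.valuationSubring →+* wL.valuationSubring where
  toFun a := ⟨σ a, by
    rw [Valuation.mem_valuationSubring_iff, hGal]
    exact a.2⟩
  map_one' := Subtype.ext (map_one σ)
  map_mul' a b := Subtype.ext (map_mul σ (a : L) (b : L))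
  map_zero' := Subtype.ext (map_zero σ)
  map_add' a b := Subtype.ext (map_add σ (a : L) (b : L))

variable (p : ℕ) [Fact p.Prime]

/-- The ring homomorphism on truncated Witt vectors induced by a ring homomorphism. -/
def twmap {R S : Type} [CommRing R] [CommRing S] (f : R →+* S) (n : ℕ) :
    TruncatedWittVector p n R →+* TruncatedWittVector p n S :=
  RingHom.liftOfRightInverse (WittVector.truncate n) TruncatedWittVector.out
    (fun x => TruncatedWittVector.truncateFun_out x)
    ⟨(WittVector.truncate n).comp (WittVector.map f), by
      intro x hx
      have hx' : ∀ i < n, x.coeff i = 0 := (WittVector.mem_ker_truncate _ _).mp hx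
      rw [RingHom.mem_ker, RingHom.comp_apply, ← RingHom.mem_ker]
      refine (WittVector.mem_ker_truncate _ _).mpr ?_
      intro i hi
      rw [WittVector.map_coeff, hx' i hi, map_zero]⟩

theorem twmap_coeff {R S : Type} [CommRing R] [CommRing S] (f : R →+* S) (n : ℕ)
    (x : TruncatedWittVector p n R) (i : Fin n) :
    (twmap p f n x).coeff i = f (x.coeff i) := by
  have h1 : x = WittVector.truncate n x.out := (TruncatedWittVector.truncateFun_out x).symm
  rw [h1]
  rw [twmap]
  erw [RingHom.liftOfRightInverse_comp_apply]
  rw [RingHom.comp_apply, WittVector.coeff_truncate, WittVector.map_coeff,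
    WittVector.coeff_truncate, TruncatedWittVector.coeff_out]

/-- Coordinatewise Galois action on truncated Witt vectors over `O_L`. -/
def wittAction (hGal : ∀ (σ : L ≃ₐ[K] L) (a : L), wL (σ a) = wL a) (n : ℕ) :
    DistribMulAction (L ≃ₐ[K] L) (TruncatedWittVector p n wL.valuationSubring) where
  smul σ x := twmap p (galHom wL hGal σ) n x
  one_smul x := by
    show twmap p (galHom wL hGal 1) n x = x
    apply TruncatedWittVector.ext
    intro i
    rw [twmap_coeff]
    exact Subtype.ext rfl
  mul_smul σ τ x := by
    show twmap p (galHom wL hGal (σ * τ)) n x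
      = twmap p (galHom wL hGal σ) n (twmap p (galHom wL hGal τ) n x)
    apply TruncatedWittVector.ext
    intro i
    rw [twmap_coeff, twmap_coeff, twmap_coeff]
    rfl
  smul_zero σ := map_zero _
  smul_add σ x y := map_add _ x y

end

open MvPolynomial Finset

namespace Stmt10Aux

noncomputable section

variable (p : ℕ) [Fact p.Prime] (k : ℕ)

/-- Universal ring over ℤ: variables indexed by (summand, level). -/
abbrev UR := MvPolynomial (Fin k × ℕ) ℤ
abbrev UQ := MvPolynomial (Fin k × ℕ) ℚ

/-- The universal Witt vectors. -/
def YV (a : Fin k) : WittVector p (UR k) := WittVector.mk p (fun i => X (a, i))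

/-- Minus the sum of the universal Witt vectors. -/
def ZV : WittVector p (UR k) := -(∑ a : Fin k, YV p k a)

/-- Good i0 d f : every monomial of f uses only variables of level ≤ i0 and has degree ≥ d. -/
def Good (i0 d : ℕ) (f : UQ k) : Prop :=
  ∀ m ∈ f.support, (∀ v ∈ m.support, v.2 ≤ i0) ∧ d ≤ Finsupp.degree m

variable {k}

theorem Good.zero {i0 d : ℕ} : Good k i0 d 0 := by
  intro m hm; simp at hm

theorem Good.add {i0 d : ℕ} {f g : UQ k} (hf : Good k i0 d f) (hg : Good k i0 d g) :
    Good k i0 d (f + g) := by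
  classical
  intro m hm
  rcases Finset.mem_union.mp (MvPolynomial.support_add hm) with h | h
  · exact hf m h
  · exact hg m h

theorem Good.smul {i0 d : ℕ} {f : UQ k} (c : ℚ) (hf : Good k i0 d f) :
    Good k i0 d (c • f) := fun m hm => hf m (MvPolynomial.support_smul hm)

theorem Good.sum {i0 d : ℕ} {α : Type*} (s : Finset α) (F : α → UQ k)
    (h : ∀ a ∈ s, Good k i0 d (F a)) : Good k i0 d (∑ a ∈ s, F a) := by
  classical
  induction s using Finset.induction_on with
  | empty => simpa using Good.zero
  | @insert a s hx ih =>
    rw [Finset.sum_insert hx]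
    exact (h a (Finset.mem_insert_self a s)).add
      (ih fun b hb => h b (Finset.mem_insert_of_mem hb))

theorem Good.mul {i0 d e : ℕ} {f g : UQ k} (hf : Good k i0 d f) (hg : Good k i0 e g) :
    Good k i0 (d + e) (f * g) := by
  classical
  intro m hm
  have h2 := MvPolynomial.support_mul f g hm
  rcases Finset.mem_add.mp h2 with ⟨m1, hm1, m2, hm2, rfl⟩
  obtain ⟨hv1, hd1⟩ := hf m1 hm1
  obtain ⟨hv2, hd2⟩ := hg m2 hm2
  constructor
  · intro v hv
    rcases Finset.mem_union.mp (Finsupp.support_add hv) with h | h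
    · exact hv1 v h
    · exact hv2 v h
  · have : Finsupp.degree (m1 + m2) = Finsupp.degree m1 + Finsupp.degree m2 := by
      simp [Finsupp.degree_eq_weight_one, map_add]
    omega

theorem Good.pow {i0 d e : ℕ} {f : UQ k} (hf : Good k i0 d f) (he : 1 ≤ e) :
    Good k i0 (d * e) (f ^ e) := by
  induction e with
  | zero => omega
  | succ n ih =>
    rcases Nat.eq_or_lt_of_le he with h | h
    · simpa [← h] using hf
    · have h1 : 1 ≤ n := by omega
      have h2 := (ih h1).mul hf
      rw [pow_succ]
      have h3 : d * (n + 1) = d * n + d := by ring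
      rw [h3]
      exact h2

theorem Good.mono {i0 i0' d d' : ℕ} {f : UQ k} (hf : Good k i0 d f) (hi : i0 ≤ i0')
    (hd : d' ≤ d) : Good k i0' d' f := by
  intro m hm
  obtain ⟨h1, h2⟩ := hf m hm
  exact ⟨fun v hv => le_trans (h1 v hv) hi, le_trans hd h2⟩

theorem Good.X {i0 d : ℕ} (a : Fin k) (i : ℕ) (hi : i ≤ i0) (hd : d ≤ 1) :
    Good k i0 d (X (a, i) : UQ k) := by
  intro m hm
  rw [MvPolynomial.support_X] at hm
  rcases Finset.mem_singleton.mp hm with rfl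
  constructor
  · intro v hv
    rw [Finsupp.support_single_ne_zero _ one_ne_zero] at hv
    rcases Finset.mem_singleton.mp hv with rfl
    exact hi
  · rw [Finsupp.degree_apply, Finsupp.support_single_ne_zero _ one_ne_zero]
    simpa using hd


variable (k)

/-- coefficient embedding ℤ → ℚ on polynomials -/
def ψ : UR k →+* UQ k := MvPolynomial.map (Int.castRingHom ℚ)

theorem ψ_injective : Function.Injective (ψ k) :=
  MvPolynomial.map_injective _ Int.cast_injective

/-- The ℚ-level universal Witt vectors. -/
def YQ (a : Fin k) : WittVector p (UQ k) := WittVector.map (ψ k) (YV p k a)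

def ZQ : WittVector p (UQ k) := WittVector.map (ψ k) (ZV p k)

/-- coefficients of ZQ -/
def Zc (i : ℕ) : UQ k := (ZQ p k).coeff i

variable {k}

theorem coeff_YQ (a : Fin k) (i : ℕ) : (YQ p k a).coeff i = ψ k (X (a, i)) := by
  rw [YQ, WittVector.map_coeff, YV, WittVector.coeff_mk]

theorem sumYZ : (∑ a : Fin k, YQ p k a) + ZQ p k = 0 := by
  rw [ZQ, ZV, map_neg, map_sum]
  simp [YQ]

theorem ghost_formula (w : WittVector p (UQ k)) (m : ℕ) :
    WittVector.ghostComponent m w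
      = ∑ i ∈ range (m + 1), (p : UQ k) ^ i * w.coeff i ^ p ^ (m - i) := by
  rw [WittVector.ghostComponent_apply, aeval_wittPolynomial]

theorem smul_form (j : ℕ) (f : UQ k) : (p : UQ k) ^ j * f = ((p : ℚ) ^ j) • f := by
  rw [MvPolynomial.smul_eq_C_mul, map_pow, map_natCast]

/-- The ghost relations. -/
theorem ppow_pos (e : ℕ) : 1 ≤ p ^ e := Nat.one_le_pow _ _ (Fact.out (p := p.Prime)).pos

theorem GH (m : ℕ) :
    ∑ i ∈ range (m + 1), (p : UQ k) ^ i *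
      ((∑ a : Fin k, (ψ k (X (a, i))) ^ p ^ (m - i)) + (Zc p k i) ^ p ^ (m - i)) = 0 := by
  have h0 := congrArg (WittVector.ghostComponent (p := p) m) (sumYZ p (k := k))
  rw [map_add, map_sum, map_zero, ghost_formula] at h0
  have h1 : ∀ a : Fin k, WittVector.ghostComponent m (YQ p k a)
      = ∑ i ∈ range (m + 1), (p : UQ k) ^ i * (ψ k (X (a, i))) ^ p ^ (m - i) := by
    intro a
    rw [ghost_formula]
    exact Finset.sum_congr rfl fun i _ => by rw [coeff_YQ]
  calc ∑ i ∈ range (m + 1), (p : UQ k) ^ i *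
      ((∑ a : Fin k, (ψ k (X (a, i))) ^ p ^ (m - i)) + (Zc p k i) ^ p ^ (m - i))
      = (∑ a : Fin k, WittVector.ghostComponent m (YQ p k a))
        + ∑ i ∈ range (m + 1), (p : UQ k) ^ i * (Zc p k i) ^ p ^ (m - i) := by
        simp only [mul_add, Finset.sum_add_distrib, h1, Finset.mul_sum]
        rw [Finset.sum_comm]
    _ = 0 := h0

theorem good_ghost_Y (i : ℕ) (a : Fin k) :
    Good k i 1 (WittVector.ghostComponent i (YQ p k a)) := by
  rw [ghost_formula]
  apply Good.sum
  intro j hj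
  have hj' : j < i + 1 := Finset.mem_range.mp hj
  rw [smul_form, coeff_YQ]
  have h1 : Good k j 1 ((ψ k) (X (a, j)) : UQ k) := by
    rw [ψ, MvPolynomial.map_X]
    exact Good.X a j le_rfl le_rfl
  have h2 := h1.pow (ppow_pos p (i - j))
  exact (h2.mono (by omega) (by simpa using ppow_pos p (i - j))).smul _

theorem good_Zc : ∀ i, Good k i 1 (Zc p k i) := by
  intro i
  induction i using Nat.strong_induction_on with
  | _ i ih =>
    have hgh := ghost_formula p (ZQ p k) i
    have hsplit : WittVector.ghostComponent i (ZQ p k)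
        = (∑ j ∈ range i, (p : UQ k) ^ j * (Zc p k j) ^ p ^ (i - j))
          + (p : UQ k) ^ i * (Zc p k i) := by
      rw [hgh, Finset.sum_range_succ]
      simp [Zc]
    have key : (p : UQ k) ^ i * Zc p k i
        = WittVector.ghostComponent i (ZQ p k)
          - ∑ j ∈ range i, (p : UQ k) ^ j * (Zc p k j) ^ p ^ (i - j) := by
      rw [hsplit]; ring
    have hp : ((p : ℚ) ^ i) ≠ 0 := by
      exact_mod_cast pow_ne_zero _ (Nat.cast_ne_zero.mpr (Fact.out (p := p.Prime)).ne_zero)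
    have hZ : Zc p k i = ((p : ℚ) ^ i)⁻¹ • ((p : UQ k) ^ i * Zc p k i) := by
      rw [smul_form, smul_smul, inv_mul_cancel₀ hp, one_smul]
    rw [hZ, key]
    apply Good.smul
    have hg1 : Good k i 1 (WittVector.ghostComponent i (ZQ p k)) := by
      have : WittVector.ghostComponent i (ZQ p k)
          = -∑ a : Fin k, WittVector.ghostComponent i (YQ p k a) := by
        have := congrArg (WittVector.ghostComponent (p := p) i) (sumYZ p (k := k))
        rw [map_add, map_sum, map_zero] at this
        linear_combination this
      rw [this]
      have hs : Good k i 1 (∑ a : Fin k, WittVector.ghostComponent i (YQ p k a)) :=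
        Good.sum _ _ fun a _ => good_ghost_Y p i a
      simpa using hs.smul (-1)
    have hg2 : Good k i 1 (∑ j ∈ range i, (p : UQ k) ^ j * (Zc p k j) ^ p ^ (i - j)) := by
      apply Good.sum
      intro j hj
      rw [smul_form]
      have hj' : j < i := Finset.mem_range.mp hj
      exact (((ih j hj').pow (ppow_pos p (i - j))).mono (by omega)
        (by simpa using ppow_pos p (i - j))).smul _
    have := hg1.add (hg2.smul (-1))
    simpa [sub_eq_add_neg] using this


variable (k)

/-- "trace" of level m -/
def Pm (m : ℕ) : UR k := (∑ a : Fin k, X (a, m)) + (ZV p k).coeff m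

/-- "trace of p-th powers" of level m -/
def Qp (m : ℕ) : UR k := (∑ a : Fin k, (X (a, m)) ^ p) + ((ZV p k).coeff m) ^ p

/-- sum of e-th powers at level i, over ℚ -/
def Ee (i e : ℕ) : UQ k := (∑ a : Fin k, (ψ k (X (a, i))) ^ e) + (Zc p k i) ^ e

variable {k}

theorem ψ_ZVcoeff (m : ℕ) : ψ k ((ZV p k).coeff m) = Zc p k m := by
  rw [Zc, ZQ, WittVector.map_coeff]

theorem ψ_Pm (m : ℕ) : ψ k (Pm p k m) = Ee p k m 1 := by
  rw [Pm, Ee, map_add, map_sum, ψ_ZVcoeff]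
  simp

theorem ψ_Qp (m : ℕ) : ψ k (Qp p k m) = Ee p k m p := by
  rw [Qp, Ee, map_add, map_sum]
  simp only [map_pow]
  rw [ψ_ZVcoeff]

theorem good_Ee (i e : ℕ) (he : 1 ≤ e) : Good k i e (Ee p k i e) := by
  have hX : ∀ a : Fin k, Good k i e ((ψ k (X (a, i))) ^ e) := by
    intro a
    have h1 : Good k i 1 ((ψ k) (X (a, i)) : UQ k) := by
      rw [ψ, MvPolynomial.map_X]
      exact Good.X a i le_rfl le_rfl
    simpa using h1.pow he
  have hZ : Good k i e ((Zc p k i) ^ e) := by simpa using (good_Zc p i).pow he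
  exact (Good.sum _ _ fun a _ => hX a).add hZ

set_option maxHeartbeats 1000000 in
theorem universal (ℓ : ℕ) (hl : 1 ≤ ℓ) :
    ∃ H : UR k,
      (-(p : UR k)) * Pm p k ℓ
        = Qp p k (ℓ - 1) - (Pm p k (ℓ - 1)) ^ p
          - ((-1 - (-1) ^ p : ℤ) : UR k) * (Pm p k (ℓ - 1)) ^ p + (p : UR k) * H
      ∧ ∀ m ∈ H.support, (∀ v ∈ m.support, v.2 + 2 ≤ ℓ) ∧ p ^ 2 ≤ Finsupp.degree m := by
  classical
  have hp : p.Prime := Fact.out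
  set l1 := ℓ - 1 with hl1
  have hℓ : l1 + 1 = ℓ := by omega
  -- the integral element N
  set N : UR k := (-(p : UR k)) * Pm p k ℓ - Qp p k l1 - (-1 : UR k) ^ p * (Pm p k l1) ^ p
    with hN
  -- Step 1: divisibility of N by p
  have hdvd : MvPolynomial.C ((p : ℕ) : ℤ) ∣ N := by
    rw [MvPolynomial.C_dvd_iff_dvd_coeff]
    intro m
    have hmap : MvPolynomial.map (Int.castRingHom (ZMod p)) N = 0 := by
      have hQ : MvPolynomial.map (Int.castRingHom (ZMod p)) ((Pm p k l1) ^ p)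
          = MvPolynomial.map (Int.castRingHom (ZMod p)) (Qp p k l1) := by
        rw [map_pow, Pm, Qp, map_add, map_add, map_sum, map_sum]
        rw [add_pow_char, sum_pow_char]
        simp [map_pow]
      rw [hN, map_sub, map_sub, map_mul, map_neg, map_natCast, map_mul, map_pow, map_neg,
        map_one, hQ]
      rw [CharP.cast_eq_zero (MvPolynomial (Fin k × ℕ) (ZMod p)) p]
      rcases hp.eq_two_or_odd' with h2 | hodd
      · subst h2
        ring_nf
        rw [show (2 : MvPolynomial (Fin k × ℕ) (ZMod 2)) = 0 by
          exact_mod_cast CharP.cast_eq_zero (MvPolynomial (Fin k × ℕ) (ZMod 2)) 2]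
        ring
      · rw [hodd.neg_one_pow]
        ring
    have := congrArg (MvPolynomial.coeff m) hmap
    rw [MvPolynomial.coeff_map, MvPolynomial.coeff_zero] at this
    exact_mod_cast (ZMod.intCast_zmod_eq_zero_iff_dvd _ p).mp this
  obtain ⟨H, hH⟩ := hdvd
  have hCp : (MvPolynomial.C ((p : ℕ) : ℤ) : UR k) = (p : UR k) := by
    exact_mod_cast map_natCast (MvPolynomial.C : ℤ →+* UR k) p
  rw [hCp] at hH
  refine ⟨H, ?_, ?_⟩
  · have : ((-1 - (-1) ^ p : ℤ) : UR k) = -1 - (-1) ^ p := by push_cast; ring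
    rw [this]
    linear_combination hH
  -- Step 2: support property via Good
  · -- ghost identities
    have e1 := GH p (k := k) ℓ
    have e2 := GH p (k := k) l1
    set S' : UQ k := ∑ i ∈ range l1, (p : UQ k) ^ i * Ee p k i (p ^ (ℓ - i)) with hS
    set T' : UQ k := ∑ i ∈ range l1, (p : UQ k) ^ i * Ee p k i (p ^ (l1 - i)) with hT
    have e1' : S' + (p : UQ k) ^ l1 * Ee p k l1 p + (p : UQ k) ^ ℓ * Ee p k ℓ 1 = 0 := by
      rw [hS]
      have h0 : ∀ i e, (∑ a : Fin k, (ψ k (X (a, i))) ^ e) + (Zc p k i) ^ e = Ee p k i e :=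
        fun i e => rfl
      rw [← e1, ← hℓ, Finset.sum_range_succ, Finset.sum_range_succ]
      simp only [h0]
      rw [show l1 + 1 - (l1 + 1) = 0 by omega, show l1 + 1 - l1 = 1 by omega]
      rw [pow_zero, pow_one, hℓ]
    have e2' : T' + (p : UQ k) ^ l1 * Ee p k l1 1 = 0 := by
      rw [hT, ← e2, Finset.sum_range_succ]
      rw [show l1 - l1 = 0 by omega, pow_zero]
      congr 1
    -- key identity
    have hkey : (p : UQ k) ^ l1 ^ 1 * ((p : UQ k) ^ l1) ^ (p - 1) * ((p:UQ k) * ψ k H)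
        = ((p : UQ k) ^ l1) ^ (p - 1) * S' - T' ^ p := by
      have hψN : ψ k N = (-(p:UQ k)) * Ee p k ℓ 1 - Ee p k l1 p
          - (-1 : UQ k) ^ p * (Ee p k l1 1) ^ p := by
        rw [hN, map_sub, map_sub, map_mul, map_neg, map_natCast, map_mul, map_pow, map_pow,
          map_neg, map_one, ψ_Pm, ψ_Pm, ψ_Qp]
      have hpψH : (p : UQ k) * ψ k H = ψ k N := by
        rw [hH, map_mul, map_natCast]
      rw [hpψH, hψN]
      have hApow : ((p : UQ k) ^ l1) ^ (p - 1) * (p : UQ k) ^ l1 = ((p : UQ k) ^ l1) ^ p := by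
        rw [← pow_succ, Nat.sub_add_cancel hp.one_le]
      have hTp : T' ^ p = (-1 : UQ k) ^ p * (((p : UQ k) ^ l1) ^ p) * (Ee p k l1 1) ^ p := by
        have : T' = -((p : UQ k) ^ l1 * Ee p k l1 1) := by linear_combination e2'
        rw [this, neg_pow, mul_pow]
        ring
      have hpl : (p : UQ k) ^ ℓ = (p : UQ k) ^ l1 * (p : UQ k) := by
        rw [← hℓ, pow_succ]
      have hEl : (p : UQ k) ^ l1 * ((p : UQ k) * Ee p k ℓ 1)
          = -(S' + (p : UQ k) ^ l1 * Ee p k l1 p) := by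
        linear_combination e1' - hpl * Ee p k ℓ 1
      rw [hTp]
      rw [pow_one]
      linear_combination (-1 : UQ k) * ((p:UQ k)^l1)^(p-1) * hEl
        - (Ee p k l1 1)^p * (-1:UQ k)^p * hApow
    -- Good for ψ H
    have hq : ((p : ℚ)) ≠ 0 := Nat.cast_ne_zero.mpr hp.ne_zero
    have hgood : Good k (ℓ - 2) (p ^ 2) (ψ k H) := by
      have hS'good : Good k (ℓ - 2) (p ^ 2) S' := by
        rw [hS]
        apply Good.sum
        intro i hi
        have hi' : i < l1 := Finset.mem_range.mp hi
        rw [smul_form]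
        refine ((good_Ee p i _ (ppow_pos p _)).mono (by omega) ?_).smul _
        calc p ^ 2 ≤ p ^ (ℓ - i) := Nat.pow_le_pow_right hp.pos (by omega)
          _ = p ^ (ℓ - i) := rfl
      have hT'good : Good k (ℓ - 2) p T' := by
        rw [hT]
        apply Good.sum
        intro i hi
        have hi' : i < l1 := Finset.mem_range.mp hi
        rw [smul_form]
        refine ((good_Ee p i _ (ppow_pos p _)).mono (by omega) ?_).smul _
        calc p = p ^ 1 := (pow_one p).symm
          _ ≤ p ^ (l1 - i) := Nat.pow_le_pow_right hp.pos (by omega)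
      have hTp_good : Good k (ℓ - 2) (p ^ 2) (T' ^ p) := by
        have := hT'good.pow hp.one_le
        rwa [sq]
      have hRHS : Good k (ℓ - 2) (p ^ 2)
          (((p : UQ k) ^ l1) ^ (p - 1) * S' - T' ^ p) := by
        have h1 : (((p : UQ k) ^ l1) ^ (p - 1)) * S' = (((p:ℚ) ^ l1) ^ (p-1)) • S' := by
          rw [MvPolynomial.smul_eq_C_mul, map_pow, map_pow, map_natCast]
        rw [h1, sub_eq_add_neg]
        exact ((hS'good.smul _).add (by simpa using hTp_good.smul (-1)))
      -- divide by the p-powers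
      have hc : ((p : ℚ) ^ l1 ^ 1 * ((p:ℚ) ^ l1) ^ (p - 1) * (p:ℚ)) ≠ 0 := by
        positivity
      have hexp : (p : UQ k) ^ l1 ^ 1 * ((p : UQ k) ^ l1) ^ (p - 1) * ((p:UQ k) * ψ k H)
          = ((p : ℚ) ^ l1 ^ 1 * ((p:ℚ) ^ l1) ^ (p - 1) * (p:ℚ)) • ψ k H := by
        rw [MvPolynomial.smul_eq_C_mul]
        simp only [map_mul, map_pow, map_natCast]
        push_cast
        ring
      have : ψ k H = ((p : ℚ) ^ l1 ^ 1 * ((p:ℚ) ^ l1) ^ (p - 1) * (p:ℚ))⁻¹ •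
          (((p : UQ k) ^ l1) ^ (p - 1) * S' - T' ^ p) := by
        rw [← hkey, hexp, smul_smul, inv_mul_cancel₀ hc, one_smul]
      rw [this]
      exact hRHS.smul _
    -- transfer to H and finish
    have hinj : Function.Injective (Int.castRingHom ℚ) := fun a b h => Int.cast_injective h
    have hsupp : H.support = (ψ k H).support := by
      rw [ψ, (MvPolynomial.support_map_of_injective H hinj).symm]
    by_cases h2 : 2 ≤ ℓ
    · intro m hm
      rw [hsupp] at hm
      obtain ⟨h3, h4⟩ := hgood m hm
      exact ⟨fun v hv => by have := h3 v hv; omega, h4⟩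
    · -- ℓ = 1 : H = 0
      have hℓ1 : ℓ = 1 := by omega
      have hl10 : l1 = 0 := by omega
      have hT0 : T' = 0 := by
        rw [hT, hl10]
        simp
      have hS0 : S' = 0 := by
        rw [hS, hl10]
        simp
      have hψH0 : ψ k H = 0 := by
        have hpne : (p : UQ k) ≠ 0 := Nat.cast_ne_zero.mpr hp.ne_zero
        have h0 : (p : UQ k) ^ l1 ^ 1 * ((p : UQ k) ^ l1) ^ (p - 1) * ((p:UQ k) * ψ k H)
            = 0 := by
          rw [hkey, hS0, hT0]
          simp [zero_pow hp.ne_zero]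
        rw [hl10] at h0
        simpa [hpne] using h0
      have : H = 0 := ψ_injective k (by rw [hψH0, map_zero])
      subst this
      intro m hm
      simp at hm

end

end Stmt10Aux

section Aux

theorem aux_sum_powers {G : Type*} [Group G] [Fintype G] (σ : G)
    (hσ : ∀ g : G, g ∈ Subgroup.zpowers σ) {M : Type*} [AddCommMonoid M] (F : G → M) :
    ∑ a ∈ Finset.range (Fintype.card G), F (σ ^ a) = ∑ g : G, F g := by
  classical
  have horder : orderOf σ = Fintype.card G := by
    rw [orderOf_eq_card_of_forall_mem_zpowers hσ, Nat.card_eq_fintype_card]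
  have hinj : Set.InjOn (σ ^ ·) (Finset.range (Fintype.card G) : Set ℕ) := by
    intro a ha b hb hab
    refine pow_injOn_Iio_orderOf ?_ ?_ hab
    · simpa [horder] using ha
    · simpa [horder] using hb
  have himg : (Finset.range (Fintype.card G)).image (σ ^ ·) = Finset.univ := by
    apply Finset.eq_univ_of_card
    rw [Finset.card_image_of_injOn hinj, Finset.card_range]
  rw [← himg, Finset.sum_image (fun a ha b hb hab => hinj ha hb hab)]

theorem val_natCast_le_one_s10 {L : Type*} [Field L] (wL : Valuation L Zm0) (m : ℕ) :
    wL ((m : L)) ≤ 1 := by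
  induction m with
  | zero => simp
  | succ m ih =>
    push_cast
    exact le_trans (wL.map_add _ _) (max_le ih (le_of_eq wL.map_one))

theorem val_intCast_le_one_s10 {L : Type*} [Field L] (wL : Valuation L Zm0) (m : ℤ) :
    wL ((m : L)) ≤ 1 := by
  rcases le_or_gt 0 m with h | h
  · lift m to ℕ using h
    exact_mod_cast val_natCast_le_one_s10 wL m
  · have h1 : ((m : L)) = -(((-m).toNat : ℕ) : L) := by
      have h2 : ((-m).toNat : ℤ) = -m := Int.toNat_of_nonneg (by omega)
      have h3 : (((-m).toNat : ℤ) : L) = ((-m : ℤ) : L) := by rw [h2]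
      push_cast at h3
      rw [h3]
      ring
    rw [h1, Valuation.map_neg]
    exact val_natCast_le_one_s10 wL _

end Aux
set_option maxHeartbeats 1600000

/-- Lemma `C` of Hogadi–Pisolkar. Let `L/K` be a totally ramified cyclic
extension of degree `p` and `(x_1, …, x_n) ∈ W_n(O_L)` a Witt vector of trace zero in
`W_n(O_L)`. Then for each `2 ≤ ℓ ≤ n` (below `ℓ = ℓ' + 1`),
`−tr(x_ℓ) = (tr(x_{ℓ−1}^p) − tr(x_{ℓ−1})^p)/p − C·tr(x_{ℓ−1})^p + h`, where
`C = (1/p)·Σ_{j=1}^{p−1} (−1)^j C(p,j) ∈ ℤ` and `h ∈ O_K` is a polynomial expression in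
`x_1, …, x_{ℓ−2}` and their conjugates with all monomials of degree `≥ p²` (expressed below
through the valuation bound `v_L(h) ≥ p² · min{v_L(x_j) : j ≤ ℓ−2}`). The identity is stated
multiplied through by `p`. -/
theorem stmt10 (p : ℕ) (hp : p.Prime) [Fact p.Prime] (K L : Type) [Field K] [Field L]
    [Algebra K L] [CharZero K] [IsGalois K L] [FiniteDimensional K L]
    [IsCyclic (L ≃ₐ[K] L)]
    (hdeg : Module.finrank K L = p)
    (wK : Valuation K Zm0) (wL : Valuation L Zm0)
    -- the valuations are normalized (value group exactly `ℤ`)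
    (hwK : Function.Surjective wK) (hwL : Function.Surjective wL)
    -- the fields are complete
    (hKcomplete : @CompleteSpace K (Valued.mk' wK).toUniformSpace)
    (hLcomplete : @CompleteSpace L (Valued.mk' wL).toUniformSpace)
    -- the extension is totally ramified of degree `p` : `v_L = p·v_K` on `K`
    (hext : ∀ x : K, wL (algebraMap K L x) = wK x ^ p)
    -- the residue characteristic is `p`
    (hres : wK (p : K) < 1)
    -- the Galois action preserves the valuation (so it acts on `O_L`)
    (hGal : ∀ (σ : L ≃ₐ[K] L) (a : L), wL (σ a) = wL a)
    -- `s` is the ramification break of `L/K`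
    (s : ℤ) (hspos : 0 < s)
    (hs : ∀ σ : L ≃ₐ[K] L, σ ≠ AlgEquiv.refl →
      (∀ a : L, wL a ≤ 1 → wL (σ a - a) ≤ oa (-(s + 1))) ∧
      (∃ a : L, wL a ≤ 1 ∧ wL (σ a - a) = oa (-(s + 1)))) :
    ∀ (n : ℕ) (x : TruncatedWittVector p n wL.valuationSubring),
      (∑ σ : L ≃ₐ[K] L, twmap p (galHom wL hGal σ) n x) = 0 →
      ∀ ℓ ℓ' : Fin n, (ℓ' : ℕ) + 1 = (ℓ : ℕ) →
      ∀ C : ℤ, (p : ℤ) * C = (∑ j ∈ Finset.Ico 1 p, (-1 : ℤ) ^ j * (p.choose j : ℤ)) →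
      ∃ h : K, wK h ≤ 1 ∧
        (p : K) * (-(Algebra.trace K L ((x.coeff ℓ : ↥wL.valuationSubring) : L))) =
          (Algebra.trace K L (((x.coeff ℓ' : ↥wL.valuationSubring) : L) ^ p) -
            Algebra.trace K L ((x.coeff ℓ' : ↥wL.valuationSubring) : L) ^ p) -
          (p : K) * (C : K) *
            Algebra.trace K L ((x.coeff ℓ' : ↥wL.valuationSubring) : L) ^ p +
          (p : K) * h ∧
        wL (algebraMap K L h) ≤
          ((Finset.univ.filter fun j : Fin n => (j : ℕ) + 2 ≤ (ℓ : ℕ)).sup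
            fun j => wL ((x.coeff j : ↥wL.valuationSubring) : L)) ^ (p ^ 2) := by
  intro n x hx ℓ ℓ' hℓℓ' C hC
  classical
  have hp : p.Prime := Fact.out
  have hpK : ((p : K)) ≠ 0 := Nat.cast_ne_zero.mpr hp.ne_zero
  haveI : CharZero L := charZero_of_injective_algebraMap (algebraMap K L).injective
  have hpL : ((p : L)) ≠ 0 := Nat.cast_ne_zero.mpr hp.ne_zero
  obtain ⟨σ, hσ⟩ := IsCyclic.exists_generator (α := L ≃ₐ[K] L)
  have hcard : Fintype.card (L ≃ₐ[K] L) = p := by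
    rw [← Nat.card_eq_fintype_card, IsGalois.card_aut_eq_finrank, hdeg]
  have hk1 : p - 1 + 1 = p := Nat.succ_pred_eq_of_pos hp.pos
  have hsplitM : ∀ {M : Type} [AddCommMonoid M] (F : ℕ → M),
      ∑ a ∈ Finset.range p, F a = (∑ a ∈ Finset.range (p - 1), F a) + F (p - 1) := by
    intro M _ F
    conv_lhs => rw [← hk1]
    exact Finset.sum_range_succ F (p - 1)
  have hιcoe : ∀ z : wL.valuationSubring, wL.valuationSubring.subtype z = (z : L) :=
    fun z => rfl
  -- value of the constant C
  have hCval : (p : ℤ) * C = -1 - (-1) ^ p := by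
    have halt : ∑ i ∈ Finset.range (p + 1), (-1 : ℤ) ^ i * (p.choose i) = 0 := by
      rw [Int.alternating_sum_range_choose, if_neg hp.ne_zero]
    have hsplit : ∑ i ∈ Finset.range (p + 1), (-1 : ℤ) ^ i * (p.choose i)
        = (1 + ∑ j ∈ Finset.Ico 1 p, (-1 : ℤ) ^ j * (p.choose j)) + (-1) ^ p := by
      rw [Finset.sum_range_succ]
      congr 1
      · rw [Finset.range_eq_Ico, Finset.sum_eq_sum_Ico_succ_bot hp.pos]
        simp
      · simp
    rw [hsplit] at halt
    rw [hC]
    linear_combination halt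
  -- truncation compatibility
  have htw0 : ∀ (f : wL.valuationSubring →+* wL.valuationSubring)
      (z : WittVector p wL.valuationSubring),
      twmap p f n (WittVector.truncate n z) = WittVector.truncate n (WittVector.map f z) := by
    intro f z
    rw [twmap]; erw [RingHom.liftOfRightInverse_comp_apply]
    rfl
  have htw : ∀ g : L ≃ₐ[K] L, twmap p (galHom wL hGal g) n x
      = WittVector.truncate n (WittVector.map (galHom wL hGal g) x.out) := by
    intro g
    conv_lhs => rw [show x = WittVector.truncate n x.out from
      (TruncatedWittVector.truncateFun_out x).symm]
    exact htw0 _ _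
  have hzero : ∑ a ∈ Finset.range p,
      WittVector.truncate n (WittVector.map (galHom wL hGal (σ ^ a)) x.out) = 0 := by
    have h1 := aux_sum_powers σ hσ (fun g => twmap p (galHom wL hGal g) n x)
    rw [hcard] at h1
    calc ∑ a ∈ Finset.range p,
        WittVector.truncate n (WittVector.map (galHom wL hGal (σ ^ a)) x.out)
        = ∑ a ∈ Finset.range p, twmap p (galHom wL hGal (σ ^ a)) n x :=
          Finset.sum_congr rfl fun a _ => (htw _).symm
      _ = ∑ g : L ≃ₐ[K] L, twmap p (galHom wL hGal g) n x := h1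
      _ = 0 := hx
  -- the Witt vector -WA realizes the last conjugate in low coordinates
  set WA : WittVector p wL.valuationSubring :=
    ∑ a : Fin (p - 1), WittVector.map (galHom wL hGal (σ ^ (a : ℕ))) x.out with hWA
  have hWAr : WA = ∑ a ∈ Finset.range (p - 1),
      WittVector.map (galHom wL hGal (σ ^ a)) x.out := by
    rw [hWA, ← Fin.sum_univ_eq_sum_range
      (fun a => WittVector.map (galHom wL hGal (σ ^ a)) x.out) (p - 1)]
  have hWAzero : WittVector.truncate n
      (WA + WittVector.map (galHom wL hGal (σ ^ (p - 1))) x.out) = 0 := by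
    rw [map_add, hWAr, map_sum]
    have h2 := hsplitM (fun a =>
      WittVector.truncate n (WittVector.map (galHom wL hGal (σ ^ a)) x.out))
    rw [← h2]
    exact hzero
  have hZco : ∀ i : ℕ, i < n →
      (-WA).coeff i = galHom wL hGal (σ ^ (p - 1)) (x.out.coeff i) := by
    intro i hi
    have h2 : WittVector.truncate n (WittVector.map (galHom wL hGal (σ ^ (p - 1))) x.out)
        = WittVector.truncate n (-WA) := by
      rw [map_neg]
      have h3 := hWAzero
      rw [map_add] at h3
      linear_combination h3
    have h3 := congrArg (fun z => TruncatedWittVector.coeff (⟨i, hi⟩ : Fin n) z) h2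
    simp only [WittVector.coeff_truncate, WittVector.map_coeff] at h3
    exact h3.symm
  -- evaluation homomorphism
  set ev : Stmt10Aux.UR (p - 1) →+* wL.valuationSubring :=
    (MvPolynomial.aeval (R := ℤ)
      (fun v : Fin (p - 1) × ℕ => galHom wL hGal (σ ^ (v.1 : ℕ)) (x.out.coeff v.2))).toRingHom
    with hev
  have hevX : ∀ v : Fin (p - 1) × ℕ,
      ev (MvPolynomial.X v) = galHom wL hGal (σ ^ (v.1 : ℕ)) (x.out.coeff v.2) := by
    intro v
    rw [hev]
    exact MvPolynomial.aeval_X _ v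
  have hmapY : ∀ a : Fin (p - 1), WittVector.map ev (Stmt10Aux.YV p (p - 1) a)
      = WittVector.map (galHom wL hGal (σ ^ (a : ℕ))) x.out := by
    intro a
    ext i
    rw [WittVector.map_coeff, WittVector.map_coeff, Stmt10Aux.YV, WittVector.coeff_mk,
      hevX (a, i)]
  have hmapZ : WittVector.map ev (Stmt10Aux.ZV p (p - 1)) = -WA := by
    rw [Stmt10Aux.ZV, map_neg, map_sum, hWA]
    congr 1
    exact Finset.sum_congr rfl fun a _ => hmapY a
  have hevZ : ∀ i : ℕ, i < n → ev ((Stmt10Aux.ZV p (p - 1)).coeff i)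
      = galHom wL hGal (σ ^ (p - 1)) (x.out.coeff i) := by
    intro i hi
    rw [← WittVector.map_coeff, hmapZ]
    exact hZco i hi
  -- traces
  have hsum_tr : ∀ w : L, ∑ a ∈ Finset.range p, (σ ^ a) w
      = algebraMap K L (Algebra.trace K L w) := by
    intro w
    rw [trace_eq_sum_automorphisms, ← hcard]
    exact aux_sum_powers σ hσ (fun g => g w)
  have hPmL : ∀ m : ℕ, m < n → wL.valuationSubring.subtype (ev (Stmt10Aux.Pm p (p - 1) m))
      = algebraMap K L (Algebra.trace K L ((x.out.coeff m : L))) := by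
    intro m hm
    rw [Stmt10Aux.Pm, map_add, map_add, map_sum, map_sum, hevZ m hm, ← hsum_tr,
      hsplitM (fun a => (σ ^ a) ((x.out.coeff m : L)))]
    congr 1
    rw [← Fin.sum_univ_eq_sum_range (fun a => (σ ^ a) ((x.out.coeff m : L))) (p - 1)]
    exact Finset.sum_congr rfl fun a _ => by rw [hevX (a, m)]; rfl
  have hQpL : ∀ m : ℕ, m < n → wL.valuationSubring.subtype (ev (Stmt10Aux.Qp p (p - 1) m))
      = algebraMap K L (Algebra.trace K L (((x.out.coeff m : L)) ^ p)) := by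
    intro m hm
    rw [Stmt10Aux.Qp, map_add, map_add, map_sum, map_sum, ← hsum_tr,
      hsplitM (fun a => (σ ^ a) (((x.out.coeff m : L)) ^ p))]
    congr 1
    · rw [← Fin.sum_univ_eq_sum_range (fun a => (σ ^ a) (((x.out.coeff m : L)) ^ p)) (p - 1)]
      refine Finset.sum_congr rfl fun a _ => ?_
      rw [map_pow, map_pow, hevX (a, m), map_pow]
      rfl
    · rw [map_pow, map_pow, hevZ m hm, map_pow]
      rfl
  -- instantiate the universal lemma
  obtain ⟨H, hid, hHsupp⟩ := Stmt10Aux.universal p (k := p - 1) (ℓ : ℕ) (by omega)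
  have hl1 : (ℓ : ℕ) - 1 = (ℓ' : ℕ) := by omega
  rw [hl1] at hid
  -- push the identity to L
  have hIdL := congrArg (fun z => wL.valuationSubring.subtype (ev z)) hid
  simp only [map_mul, map_add, map_sub, map_neg, map_pow, map_natCast, map_intCast] at hIdL
  rw [hPmL (ℓ : ℕ) ℓ.isLt, hPmL (ℓ' : ℕ) ℓ'.isLt, hQpL (ℓ' : ℕ) ℓ'.isLt] at hIdL
  have hcoℓ : (x.out.coeff (ℓ : ℕ) : L) = ((x.coeff ℓ : wL.valuationSubring) : L) := by
    rw [TruncatedWittVector.coeff_out x ℓ]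
  have hcoℓ' : (x.out.coeff (ℓ' : ℕ) : L) = ((x.coeff ℓ' : wL.valuationSubring) : L) := by
    rw [TruncatedWittVector.coeff_out x ℓ']
  rw [hcoℓ, hcoℓ'] at hIdL
  have hCL : ((-1 - (-1) ^ p : ℤ) : L) = (p : L) * (C : L) := by
    have h1 := congrArg (fun z : ℤ => (z : L)) hCval
    push_cast at h1
    push_cast
    linear_combination -h1
  rw [hCL] at hIdL
  -- the element h
  set tl : K := Algebra.trace K L ((x.coeff ℓ : wL.valuationSubring) : L) with htl
  set tP : K := Algebra.trace K L ((x.coeff ℓ' : wL.valuationSubring) : L) with htP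
  set tQ : K := Algebra.trace K L (((x.coeff ℓ' : wL.valuationSubring) : L) ^ p) with htQ
  set h : K := (-(p : K) * tl - tQ + tP ^ p + (p : K) * (C : K) * tP ^ p) / (p : K) with hh
  have halg : algebraMap K L h = wL.valuationSubring.subtype (ev H) := by
    rw [hh, map_div₀, map_natCast, div_eq_iff hpL]
    simp only [map_add, map_sub, map_mul, map_neg, map_pow, map_natCast, map_intCast]
    linear_combination hIdL
  refine ⟨h, ?_, ?_, ?_⟩
  · -- wK h ≤ 1
    have h1 : wL (algebraMap K L h) ≤ 1 := by
      rw [halg, hιcoe]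
      exact (ev H).2
    rw [hext] at h1
    exact (pow_le_one_iff hp.ne_zero).mp h1
  · -- the identity
    rw [hh]
    field_simp
    ring
  · -- the valuation bound
    rw [halg]
    set M : Zm0 := (Finset.univ.filter fun j : Fin n => (j : ℕ) + 2 ≤ (ℓ : ℕ)).sup
      (fun j => wL ((x.coeff j : wL.valuationSubring) : L)) with hM
    have hM1 : M ≤ 1 := by
      rw [hM]
      exact Finset.sup_le fun j _ => (x.coeff j).2
    have hev2 : wL.valuationSubring.subtype (ev H)
        = MvPolynomial.eval₂ (Int.castRingHom L)
            (fun v : Fin (p - 1) × ℕ => (σ ^ (v.1 : ℕ)) ((x.out.coeff v.2 : L))) H := by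
      rw [hev]
      rw [show (MvPolynomial.aeval (R := ℤ)
        (fun v : Fin (p - 1) × ℕ => galHom wL hGal (σ ^ (v.1 : ℕ)) (x.out.coeff v.2))
          : Stmt10Aux.UR (p-1) →ₐ[ℤ] wL.valuationSubring).toRingHom H
        = MvPolynomial.eval₂ (algebraMap ℤ wL.valuationSubring)
            (fun v : Fin (p - 1) × ℕ => galHom wL hGal (σ ^ (v.1 : ℕ)) (x.out.coeff v.2)) H
        from rfl]
      rw [MvPolynomial.eval₂_comp_left (wL.valuationSubring.subtype)]
      congr 1
    rw [hev2, MvPolynomial.eval₂_eq]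
    apply Valuation.map_sum_le
    intro d hd
    obtain ⟨hvar, hdeg⟩ := hHsupp d hd
    rw [Valuation.map_mul, map_prod]
    have hterm : ∀ v ∈ d.support,
        wL (((σ ^ (v.1 : ℕ)) ((x.out.coeff v.2 : L))) ^ d v) ≤ M ^ d v := by
      intro v hv
      have hv2 : v.2 + 2 ≤ (ℓ : ℕ) := hvar v hv
      have hv2n : v.2 < n := by have := ℓ.isLt; omega
      have hle : wL ((σ ^ (v.1 : ℕ)) ((x.out.coeff v.2 : L))) ≤ M := by
        rw [hGal]
        have hj : (⟨v.2, hv2n⟩ : Fin n) ∈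
            (Finset.univ.filter fun j : Fin n => (j : ℕ) + 2 ≤ (ℓ : ℕ)) :=
          Finset.mem_filter.mpr ⟨Finset.mem_univ _, hv2⟩
        have := Finset.le_sup (f := fun j : Fin n =>
          wL ((x.coeff j : wL.valuationSubring) : L)) hj
        rw [hM]
        convert this using 2
        rw [← TruncatedWittVector.coeff_out x (⟨v.2, hv2n⟩ : Fin n)]
      rw [Valuation.map_pow]
      exact pow_le_pow_left' hle _
    calc wL ((Int.castRingHom L) (H.coeff d))
          * ∏ v ∈ d.support, wL (((σ ^ (v.1 : ℕ)) ((x.out.coeff v.2 : L))) ^ d v)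
        ≤ 1 * ∏ v ∈ d.support, M ^ d v :=
          mul_le_mul' (val_intCast_le_one_s10 wL _) (Finset.prod_le_prod' hterm)
      _ = M ^ (∑ v ∈ d.support, d v) := by rw [one_mul, Finset.prod_pow_eq_pow_sum]
      _ = M ^ (p ^ 2) * M ^ (Finsupp.degree d - p ^ 2) := by
          rw [← pow_add]
          congr 1
          have : Finsupp.degree d = ∑ v ∈ d.support, d v := rfl
          omega
      _ ≤ M ^ (p ^ 2) * 1 := mul_le_mul' le_rfl (pow_le_one' hM1 _)
      _ = M ^ (p ^ 2) := mul_one _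
end
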